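/- Necessary condition for double optimality: if (τ*_1, τ*_2) ∈ T_S × T_S is optimal for v(S) (i.e. v(S) = E[ψ(τ*_1,τ*_2)|F_S] a.s.), then with A = {τ*_1 ≤ τ*_2}: (1) τ*_1 ∧ τ*_2 is optimal for u(S); (2) τ*_2 is optimal for u_2(τ*_1) a.s. on A; (3) τ*_1 is optimal for u_1(τ*_2) a.s. on A^c; moreover A ⊂ {u_1(τ*_1 ∧ τ*_2) ≤ u_2(τ*_1 ∧ τ*_2)}. -/

import Mathlib

open MeasureTheory Filter ENNReal

variable {Ω : Type*}

/-- A stopping time of the filtration `ℱ` with values in `[0, T]` (an element of `T_0`). -/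
def IsStoppingTimeIn {m : MeasurableSpace Ω} (ℱ : Filtration ℝ m) (T : ℝ)
    (τ : Ω → ℝ) : Prop :=
  IsStoppingTime ℱ (fun ω => (τ ω : WithTop ℝ)) ∧ ∀ ω, τ ω ∈ Set.Icc (0 : ℝ) T

/-- `θ` belongs to `T_S`: a `[0,T]`-valued stopping time with `θ ≥ S` a.s. -/
def MemTS {m : MeasurableSpace Ω} (ℱ : Filtration ℝ m) (μ : Measure Ω) (T : ℝ)
    (S θ : Ω → ℝ) : Prop :=
  IsStoppingTimeIn ℱ T θ ∧ ∀ᵐ ω ∂μ, S ω ≤ θ ω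

/-- An admissible family of nonnegative random variables indexed by stopping times:
`φ(τ)` is `F_τ`-measurable and `φ(τ) = φ(τ')` a.s. on `{τ = τ'}`. -/
def Admissible {m : MeasurableSpace Ω} (ℱ : Filtration ℝ m) (μ : Measure Ω) (T : ℝ)
    (φ : (Ω → ℝ) → Ω → ℝ) : Prop :=
  (∀ τ (hτ : IsStoppingTimeIn ℱ T τ),
      Measurable[hτ.1.measurableSpace] (φ τ) ∧ ∀ ω, 0 ≤ φ τ ω) ∧
  (∀ τ τ', IsStoppingTimeIn ℱ T τ → IsStoppingTimeIn ℱ T τ' →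
      ∀ᵐ ω ∂μ, τ ω = τ' ω → φ τ ω = φ τ' ω)

/-- `v` is an essential supremum of the family of random variables `s`:
`v` dominates every member a.s., and is a.s. below any other a.s. upper bound. -/
def IsEssSupOf {m : MeasurableSpace Ω} (μ : Measure Ω) (s : Set (Ω → ℝ))
    (v : Ω → ℝ) : Prop :=
  (∀ f ∈ s, f ≤ᵐ[μ] v) ∧ ∀ g : Ω → ℝ, (∀ f ∈ s, f ≤ᵐ[μ] g) → v ≤ᵐ[μ] g

/-- The family `{E[φ(θ) | F_S] : θ ∈ T_S}`. -/
def valueSet {m : MeasurableSpace Ω} (ℱ : Filtration ℝ m) (μ : Measure Ω) (T : ℝ)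
    (φ : (Ω → ℝ) → Ω → ℝ) (S : Ω → ℝ) (hS : IsStoppingTime ℱ (fun ω => (S ω : WithTop ℝ))) : Set (Ω → ℝ) :=
  {f | ∃ θ, MemTS ℱ μ T S θ ∧ f = μ[φ θ | hS.measurableSpace]}

/-- `v` is the value function family of the reward family `φ`:
`v(S) = ess sup_{θ ∈ T_S} E[φ(θ) | F_S]`, chosen `F_S`-measurable. -/
def IsValueFam {m : MeasurableSpace Ω} (ℱ : Filtration ℝ m) (μ : Measure Ω) (T : ℝ)
    (φ v : (Ω → ℝ) → Ω → ℝ) : Prop :=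
  ∀ S (hS : IsStoppingTimeIn ℱ T S),
    Measurable[hS.1.measurableSpace] (v S) ∧
    IsEssSupOf μ (valueSet ℱ μ T φ S hS.1) (v S)

/-- Right continuity in expectation along stopping times. -/
def RCEFam {m : MeasurableSpace Ω} (ℱ : Filtration ℝ m) (μ : Measure Ω) (T : ℝ)
    (φ : (Ω → ℝ) → Ω → ℝ) : Prop :=
  ∀ θ (θn : ℕ → Ω → ℝ), IsStoppingTimeIn ℱ T θ →
    (∀ n, IsStoppingTimeIn ℱ T (θn n)) →
    (∀ᵐ ω ∂μ, Antitone (fun n => θn n ω) ∧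
      Tendsto (fun n => θn n ω) atTop (nhds (θ ω))) →
    Tendsto (fun n => ∫ ω, φ (θn n) ω ∂μ) atTop (nhds (∫ ω, φ θ ω ∂μ))

/-- Left continuity in expectation along stopping times. -/
def LCEFam {m : MeasurableSpace Ω} (ℱ : Filtration ℝ m) (μ : Measure Ω) (T : ℝ)
    (φ : (Ω → ℝ) → Ω → ℝ) : Prop :=
  ∀ θ (θn : ℕ → Ω → ℝ), IsStoppingTimeIn ℱ T θ →
    (∀ n, IsStoppingTimeIn ℱ T (θn n)) →
    (∀ᵐ ω ∂μ, Monotone (fun n => θn n ω) ∧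
      Tendsto (fun n => θn n ω) atTop (nhds (θ ω))) →
    Tendsto (fun n => ∫ ω, φ (θn n) ω ∂μ) atTop (nhds (∫ ω, φ θ ω ∂μ))

/-- The integrability condition `v(0) = sup_{θ ∈ T_0} E[φ(θ)] < ∞`. -/
def BddReward {m : MeasurableSpace Ω} (ℱ : Filtration ℝ m) (μ : Measure Ω) (T : ℝ)
    (φ : (Ω → ℝ) → Ω → ℝ) : Prop :=
  (⨆ θ : {θ : Ω → ℝ // IsStoppingTimeIn ℱ T θ},
      ∫⁻ ω, ENNReal.ofReal (φ θ.1 ω) ∂μ) < ⊤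

/-- A supermartingale system: an admissible family `h` with
`E[h(θ) | F_{θ'}] ≤ h(θ')` a.s. whenever `θ ≥ θ'` a.s. -/
def SupermartSys {m : MeasurableSpace Ω} (ℱ : Filtration ℝ m) (μ : Measure Ω) (T : ℝ)
    (h : (Ω → ℝ) → Ω → ℝ) : Prop :=
  Admissible ℱ μ T h ∧
  ∀ θ θ' (hθ : IsStoppingTimeIn ℱ T θ) (hθ' : IsStoppingTimeIn ℱ T θ'),
    (∀ᵐ ω ∂μ, θ' ω ≤ θ ω) →
    μ[h θ | hθ'.1.measurableSpace] ≤ᵐ[μ] h θ'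

/-- `F_0` contains only sets of probability `0` or `1`. -/
def TrivialF0 {m : MeasurableSpace Ω} (ℱ : Filtration ℝ m) (μ : Measure Ω) : Prop :=
  ∀ A : Set Ω, MeasurableSet[ℱ 0] A → μ A = 0 ∨ μ A = 1

/-- A biadmissible family: `ψ(τ,σ)` is `F_{τ∨σ}`-measurable, nonnegative, and
`ψ(τ,σ) = ψ(τ',σ')` a.s. on `{τ = τ'} ∩ {σ = σ'}`. -/
def Biadmissible {m : MeasurableSpace Ω} (ℱ : Filtration ℝ m) (μ : Measure Ω) (T : ℝ)
    (ψ : (Ω → ℝ) → (Ω → ℝ) → Ω → ℝ) : Prop :=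
  (∀ τ σ (hτ : IsStoppingTimeIn ℱ T τ) (hσ : IsStoppingTimeIn ℱ T σ),
      Measurable[(hτ.1.max hσ.1).measurableSpace] (ψ τ σ) ∧ ∀ ω, 0 ≤ ψ τ σ ω) ∧
  (∀ τ τ' σ σ', IsStoppingTimeIn ℱ T τ → IsStoppingTimeIn ℱ T τ' →
      IsStoppingTimeIn ℱ T σ → IsStoppingTimeIn ℱ T σ' →
      ∀ᵐ ω ∂μ, τ ω = τ' ω → σ ω = σ' ω → ψ τ σ ω = ψ τ' σ' ω)

/-- The family `{E[ψ(τ,θ) | F_θ] : τ ∈ T_θ}` whose essential supremum is `u₁(θ)`. -/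
def u1Set {m : MeasurableSpace Ω} (ℱ : Filtration ℝ m) (μ : Measure Ω) (T : ℝ)
    (ψ : (Ω → ℝ) → (Ω → ℝ) → Ω → ℝ) (θ : Ω → ℝ) (hθ : IsStoppingTime ℱ (fun ω => (θ ω : WithTop ℝ))) :
    Set (Ω → ℝ) :=
  {f | ∃ τ, MemTS ℱ μ T θ τ ∧ f = μ[ψ τ θ | hθ.measurableSpace]}

/-- The family `{E[ψ(θ,τ) | F_θ] : τ ∈ T_θ}` whose essential supremum is `u₂(θ)`. -/
def u2Set {m : MeasurableSpace Ω} (ℱ : Filtration ℝ m) (μ : Measure Ω) (T : ℝ)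
    (ψ : (Ω → ℝ) → (Ω → ℝ) → Ω → ℝ) (θ : Ω → ℝ) (hθ : IsStoppingTime ℱ (fun ω => (θ ω : WithTop ℝ))) :
    Set (Ω → ℝ) :=
  {f | ∃ τ, MemTS ℱ μ T θ τ ∧ f = μ[ψ θ τ | hθ.measurableSpace]}

/-- The family `{E[ψ(τ₁,τ₂) | F_S] : τ₁, τ₂ ∈ T_S}` whose essential supremum is `v(S)`. -/
def pairValueSet {m : MeasurableSpace Ω} (ℱ : Filtration ℝ m) (μ : Measure Ω) (T : ℝ)
    (ψ : (Ω → ℝ) → (Ω → ℝ) → Ω → ℝ) (S : Ω → ℝ) (hS : IsStoppingTime ℱ (fun ω => (S ω : WithTop ℝ))) :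
    Set (Ω → ℝ) :=
  {f | ∃ τ₁ τ₂, MemTS ℱ μ T S τ₁ ∧ MemTS ℱ μ T S τ₂ ∧
    f = μ[ψ τ₁ τ₂ | hS.measurableSpace]}

/-- `u₁` is the family `u₁(θ) = ess sup_{τ ∈ T_θ} E[ψ(τ,θ) | F_θ]`. -/
def IsU1Fam {m : MeasurableSpace Ω} (ℱ : Filtration ℝ m) (μ : Measure Ω) (T : ℝ)
    (ψ : (Ω → ℝ) → (Ω → ℝ) → Ω → ℝ) (u₁ : (Ω → ℝ) → Ω → ℝ) : Prop :=
  ∀ θ (hθ : IsStoppingTimeIn ℱ T θ),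
    Measurable[hθ.1.measurableSpace] (u₁ θ) ∧
    IsEssSupOf μ (u1Set ℱ μ T ψ θ hθ.1) (u₁ θ)

/-- `u₂` is the family `u₂(θ) = ess sup_{τ ∈ T_θ} E[ψ(θ,τ) | F_θ]`. -/
def IsU2Fam {m : MeasurableSpace Ω} (ℱ : Filtration ℝ m) (μ : Measure Ω) (T : ℝ)
    (ψ : (Ω → ℝ) → (Ω → ℝ) → Ω → ℝ) (u₂ : (Ω → ℝ) → Ω → ℝ) : Prop :=
  ∀ θ (hθ : IsStoppingTimeIn ℱ T θ),
    Measurable[hθ.1.measurableSpace] (u₂ θ) ∧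
    IsEssSupOf μ (u2Set ℱ μ T ψ θ hθ.1) (u₂ θ)

/-- `v` is the value function family of the double stopping problem:
`v(S) = ess sup_{τ₁,τ₂ ∈ T_S} E[ψ(τ₁,τ₂) | F_S]`. -/
def IsPairValueFam {m : MeasurableSpace Ω} (ℱ : Filtration ℝ m) (μ : Measure Ω) (T : ℝ)
    (ψ : (Ω → ℝ) → (Ω → ℝ) → Ω → ℝ) (v : (Ω → ℝ) → Ω → ℝ) : Prop :=
  ∀ S (hS : IsStoppingTimeIn ℱ T S),
    IsEssSupOf μ (pairValueSet ℱ μ T ψ S hS.1) (v S)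

/-- Uniform right continuity in expectation (URCE), together with the integrability
condition `sup_{θ,S ∈ T_0} E[ψ(θ,S)] < ∞`. -/
def URCEBi {m : MeasurableSpace Ω} (ℱ : Filtration ℝ m) (μ : Measure Ω) (T : ℝ)
    (ψ : (Ω → ℝ) → (Ω → ℝ) → Ω → ℝ) : Prop :=
  (⨆ p : {p : (Ω → ℝ) × (Ω → ℝ) //
      IsStoppingTimeIn ℱ T p.1 ∧ IsStoppingTimeIn ℱ T p.2},
      ∫⁻ ω, ENNReal.ofReal (ψ p.1.1 p.1.2 ω) ∂μ) < ⊤ ∧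
  ∀ S (Sn : ℕ → Ω → ℝ), IsStoppingTimeIn ℱ T S →
    (∀ n, IsStoppingTimeIn ℱ T (Sn n)) →
    (∀ᵐ ω ∂μ, Antitone (fun n => Sn n ω) ∧
      Tendsto (fun n => Sn n ω) atTop (nhds (S ω))) →
    Tendsto (fun n => ⨆ θ : {θ : Ω → ℝ // IsStoppingTimeIn ℱ T θ},
        |∫ ω, ψ θ.1 (Sn n) ω ∂μ - ∫ ω, ψ θ.1 S ω ∂μ|) atTop (nhds 0) ∧
    Tendsto (fun n => ⨆ θ : {θ : Ω → ℝ // IsStoppingTimeIn ℱ T θ},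
        |∫ ω, ψ (Sn n) θ.1 ω ∂μ - ∫ ω, ψ S θ.1 ω ∂μ|) atTop (nhds 0)

/-- Uniform left continuity in expectation (ULCE), together with the integrability
condition `sup_{θ,S ∈ T_0} E[ψ(θ,S)] < ∞`. -/
def ULCEBi {m : MeasurableSpace Ω} (ℱ : Filtration ℝ m) (μ : Measure Ω) (T : ℝ)
    (ψ : (Ω → ℝ) → (Ω → ℝ) → Ω → ℝ) : Prop :=
  (⨆ p : {p : (Ω → ℝ) × (Ω → ℝ) //
      IsStoppingTimeIn ℱ T p.1 ∧ IsStoppingTimeIn ℱ T p.2},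
      ∫⁻ ω, ENNReal.ofReal (ψ p.1.1 p.1.2 ω) ∂μ) < ⊤ ∧
  ∀ S (Sn : ℕ → Ω → ℝ), IsStoppingTimeIn ℱ T S →
    (∀ n, IsStoppingTimeIn ℱ T (Sn n)) →
    (∀ᵐ ω ∂μ, Monotone (fun n => Sn n ω) ∧
      Tendsto (fun n => Sn n ω) atTop (nhds (S ω))) →
    Tendsto (fun n => ⨆ θ : {θ : Ω → ℝ // IsStoppingTimeIn ℱ T θ},
        |∫ ω, ψ θ.1 (Sn n) ω ∂μ - ∫ ω, ψ θ.1 S ω ∂μ|) atTop (nhds 0) ∧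
    Tendsto (fun n => ⨆ θ : {θ : Ω → ℝ // IsStoppingTimeIn ℱ T θ},
        |∫ ω, ψ (Sn n) θ.1 ω ∂μ - ∫ ω, ψ S θ.1 ω ∂μ|) atTop (nhds 0)

section DSoptHelpers

namespace DSopt

variable {m : MeasurableSpace Ω} {ℱ : Filtration ℝ m} {μ : Measure Ω} {T : ℝ}

lemma ist_iff {τ : Ω → ℝ} : IsStoppingTime ℱ (fun ω => (τ ω : WithTop ℝ)) ↔
    ∀ i : ℝ, MeasurableSet[ℱ i] {ω | τ ω ≤ i} := by
  simp only [IsStoppingTime, WithTop.coe_le_coe]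

lemma mset_iff {τ : Ω → ℝ} (hτ : IsStoppingTime ℱ (fun ω => (τ ω : WithTop ℝ))) {s : Set Ω}
    (hs : MeasurableSet[hτ.measurableSpace] s) (i : ℝ) :
    MeasurableSet[ℱ i] (s ∩ {ω | τ ω ≤ i}) := by
  simpa only [WithTop.coe_le_coe] using ((hτ.measurableSet s).mp hs).2 i

lemma stMax {τ σ : Ω → ℝ} (hτ : IsStoppingTime ℱ (fun ω => (τ ω : WithTop ℝ)))
    (hσ : IsStoppingTime ℱ (fun ω => (σ ω : WithTop ℝ))) :
    IsStoppingTime ℱ (fun ω => ((max (τ ω) (σ ω) : ℝ) : WithTop ℝ)) := by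
  refine ist_iff.2 fun i => ?_
  have h := (ist_iff.1 hτ i).inter (ist_iff.1 hσ i)
  convert h using 1
  ext ω
  simp [max_le_iff]

lemma stMin {τ σ : Ω → ℝ} (hτ : IsStoppingTime ℱ (fun ω => (τ ω : WithTop ℝ)))
    (hσ : IsStoppingTime ℱ (fun ω => (σ ω : WithTop ℝ))) :
    IsStoppingTime ℱ (fun ω => ((τ ⊓ σ) ω : WithTop ℝ)) := by
  refine ist_iff.2 fun i => ?_
  have h := (ist_iff.1 hτ i).union (ist_iff.1 hσ i)
  convert h using 1
  ext ω
  simp [inf_le_iff]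

lemma leMem {S θ : Ω → ℝ} (hS : IsStoppingTime ℱ (fun ω => (S ω : WithTop ℝ)))
    (hθ : IsStoppingTime ℱ (fun ω => (θ ω : WithTop ℝ))) :
    MeasurableSet[hS.measurableSpace] {ω | S ω ≤ θ ω} := by
  simpa only [WithTop.coe_le_coe] using hS.measurableSet_le_stopping_time hθ

lemma leMem' {S θ : Ω → ℝ} (hS : IsStoppingTime ℱ (fun ω => (S ω : WithTop ℝ)))
    (hθ : IsStoppingTime ℱ (fun ω => (θ ω : WithTop ℝ))) :
    MeasurableSet[hθ.measurableSpace] {ω | S ω ≤ θ ω} := by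
  simpa only [WithTop.coe_le_coe] using hS.measurableSet_stopping_time_le hθ

/-- Pasting two stopping times along a set `B ∈ F_ν` with `B ⊆ {ν ≤ ρ}` and `ν ≤ τ`
pointwise yields a stopping time. -/
lemma pasteST {ν ρ τ : Ω → ℝ} (hν : IsStoppingTime ℱ (fun ω => (ν ω : WithTop ℝ)))
    (hρ : IsStoppingTime ℱ (fun ω => (ρ ω : WithTop ℝ)))
    (hτ : IsStoppingTime ℱ (fun ω => (τ ω : WithTop ℝ))) {B : Set Ω} [∀ ω, Decidable (ω ∈ B)]
    (hB : MeasurableSet[hν.measurableSpace] B)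
    (hBρ : B ⊆ {ω | ν ω ≤ ρ ω}) (hντ : ∀ ω, ν ω ≤ τ ω) :
    IsStoppingTime ℱ (fun ω => (B.piecewise τ ρ ω : WithTop ℝ)) := by
  refine ist_iff.2 fun t => ?_
  have hBt : ∀ i, MeasurableSet[ℱ i] (B ∩ {ω | ν ω ≤ i}) := mset_iff hν hB
  have hBct : ∀ i, MeasurableSet[ℱ i] (Bᶜ ∩ {ω | ν ω ≤ i}) := mset_iff hν hB.compl
  have key : {ω | B.piecewise τ ρ ω ≤ t} =
      ((B ∩ {ω | ν ω ≤ t}) ∩ {ω | τ ω ≤ t}) ∪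
      (((Bᶜ ∩ {ω | ν ω ≤ t}) ∩ {ω | ρ ω ≤ t}) ∪ ({ω | ρ ω ≤ t} ∩ {ω | ν ω ≤ t}ᶜ)) := by
    ext ω
    simp only [Set.mem_setOf_eq, Set.mem_union, Set.mem_inter_iff, Set.mem_compl_iff]
    constructor
    · intro h
      by_cases hω : ω ∈ B
      · rw [Set.piecewise_eq_of_mem _ _ _ hω] at h
        exact Or.inl ⟨⟨hω, le_trans (hντ ω) h⟩, h⟩
      · rw [Set.piecewise_eq_of_notMem _ _ _ hω] at h
        by_cases hν' : ν ω ≤ t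
        · exact Or.inr (Or.inl ⟨⟨hω, hν'⟩, h⟩)
        · exact Or.inr (Or.inr ⟨h, hν'⟩)
    · rintro (⟨⟨hω, _⟩, h⟩ | ⟨⟨hω, _⟩, h⟩ | ⟨h, hν'⟩)
      · rwa [Set.piecewise_eq_of_mem _ _ _ hω]
      · rwa [Set.piecewise_eq_of_notMem _ _ _ hω]
      · have hω : ω ∉ B := fun hB' => hν' (le_trans (hBρ hB') h)
        rwa [Set.piecewise_eq_of_notMem _ _ _ hω]
  rw [show {ω | Set.piecewise B τ ρ ω ≤ t} = _ from key]
  exact ((hBt t).inter (ist_iff.1 hτ t)).union (((hBct t).inter (ist_iff.1 hρ t)).union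
    ((ist_iff.1 hρ t).inter (ist_iff.1 hν t).compl))

/-- Three-region pasting: on `G₁` use `α₁`, on `G₂ \ G₁` use `α₂`, elsewhere use `β`. -/
lemma paste3ST {S θ α₁ α₂ β : Ω → ℝ} (hS : IsStoppingTime ℱ (fun ω => (S ω : WithTop ℝ)))
    (hθ : IsStoppingTime ℱ (fun ω => (θ ω : WithTop ℝ)))
    (hα₁ : IsStoppingTime ℱ (fun ω => (α₁ ω : WithTop ℝ)))
    (hα₂ : IsStoppingTime ℱ (fun ω => (α₂ ω : WithTop ℝ)))
    (hβ : IsStoppingTime ℱ (fun ω => (β ω : WithTop ℝ)))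
    {C G₁ G₂ : Set Ω} [∀ ω, Decidable (ω ∈ G₁)] [∀ ω, Decidable (ω ∈ G₂)]
    (hC : MeasurableSet[hS.measurableSpace] C)
    (hG₁ : MeasurableSet[hθ.measurableSpace] G₁) (hG₂ : MeasurableSet[hθ.measurableSpace] G₂)
    (hU : G₁ ∪ G₂ = C ∩ {ω | S ω ≤ θ ω})
    (h1 : ∀ ω, θ ω ≤ α₁ ω) (h2 : ∀ ω, θ ω ≤ α₂ ω) (h3 : ∀ ω, S ω ≤ β ω) :
    IsStoppingTime ℱ (fun ω => (G₁.piecewise α₁ (G₂.piecewise α₂ β) ω : WithTop ℝ)) := by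
  refine ist_iff.2 fun t => ?_
  have hD : MeasurableSet[hS.measurableSpace] {ω | S ω ≤ θ ω} :=
    leMem hS hθ
  have hG₁t : ∀ i, MeasurableSet[ℱ i] (G₁ ∩ {ω | θ ω ≤ i}) := mset_iff hθ hG₁
  have hG₂t : ∀ i, MeasurableSet[ℱ i] ((G₁ᶜ ∩ G₂) ∩ {ω | θ ω ≤ i}) :=
    mset_iff hθ (hG₁.compl.inter hG₂)
  have hCt : ∀ i, MeasurableSet[ℱ i] (Cᶜ ∩ {ω | S ω ≤ i}) := mset_iff hS hC.compl
  have hDt : ∀ i, MeasurableSet[ℱ i] ({ω | S ω ≤ θ ω}ᶜ ∩ {ω | S ω ≤ i}) :=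
    mset_iff hS hD.compl
  have key : {ω | G₁.piecewise α₁ (G₂.piecewise α₂ β) ω ≤ t} =
      ((G₁ ∩ {ω | θ ω ≤ t}) ∩ {ω | α₁ ω ≤ t}) ∪
      ((((G₁ᶜ ∩ G₂) ∩ {ω | θ ω ≤ t}) ∩ {ω | α₂ ω ≤ t}) ∪
        (((Cᶜ ∩ {ω | S ω ≤ t}) ∪ ({ω | S ω ≤ θ ω}ᶜ ∩ {ω | S ω ≤ t})) ∩ {ω | β ω ≤ t})) := by
    ext ω
    simp only [Set.mem_setOf_eq, Set.mem_union, Set.mem_inter_iff, Set.mem_compl_iff]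
    constructor
    · intro h
      by_cases hω₁ : ω ∈ G₁
      · rw [Set.piecewise_eq_of_mem _ _ _ hω₁] at h
        exact Or.inl ⟨⟨hω₁, le_trans (h1 ω) h⟩, h⟩
      · rw [Set.piecewise_eq_of_notMem _ _ _ hω₁] at h
        by_cases hω₂ : ω ∈ G₂
        · rw [Set.piecewise_eq_of_mem _ _ _ hω₂] at h
          exact Or.inr (Or.inl ⟨⟨⟨hω₁, hω₂⟩, le_trans (h2 ω) h⟩, h⟩)
        · rw [Set.piecewise_eq_of_notMem _ _ _ hω₂] at h
          have hnot : ω ∉ C ∩ {ω | S ω ≤ θ ω} := by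
            rw [← hU]; rintro (h' | h') <;> [exact hω₁ h'; exact hω₂ h']
          have hSt : S ω ≤ t := le_trans (h3 ω) h
          rcases Classical.em (ω ∈ C) with hωC | hωC
          · exact Or.inr (Or.inr ⟨Or.inr ⟨fun hh => hnot ⟨hωC, hh⟩, hSt⟩, h⟩)
          · exact Or.inr (Or.inr ⟨Or.inl ⟨hωC, hSt⟩, h⟩)
    · rintro (⟨⟨hω₁, _⟩, h⟩ | ⟨⟨⟨hω₁, hω₂⟩, _⟩, h⟩ | ⟨hmem, h⟩)
      · rwa [Set.piecewise_eq_of_mem _ _ _ hω₁]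
      · rw [Set.piecewise_eq_of_notMem _ _ _ hω₁]
        rwa [Set.piecewise_eq_of_mem _ _ _ hω₂]
      · have hnot : ω ∉ G₁ ∪ G₂ := by
          rw [hU]
          rcases hmem with ⟨hωC, _⟩ | ⟨hωD, _⟩
          · exact fun hh => hωC hh.1
          · exact fun hh => hωD hh.2
        rw [Set.piecewise_eq_of_notMem _ _ _ fun hh => hnot (Or.inl hh)]
        rwa [Set.piecewise_eq_of_notMem _ _ _ fun hh => hnot (Or.inr hh)]
  rw [show {ω | Set.piecewise G₁ α₁ (Set.piecewise G₂ α₂ β) ω ≤ t} = _ from key]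
  exact ((hG₁t t).inter (ist_iff.1 hα₁ t)).union (((hG₂t t).inter (ist_iff.1 hα₂ t)).union
    (((hCt t).union (hDt t)).inter (ist_iff.1 hβ t)))

/-- `C ∈ F_S` implies `C ∩ {S ≤ θ} ∈ F_θ`. -/
lemma interMem {S θ : Ω → ℝ} (hS : IsStoppingTime ℱ (fun ω => (S ω : WithTop ℝ)))
    (hθ : IsStoppingTime ℱ (fun ω => (θ ω : WithTop ℝ)))
    {C : Set Ω} (hC : MeasurableSet[hS.measurableSpace] C) :
    MeasurableSet[hθ.measurableSpace] (C ∩ {ω | S ω ≤ θ ω}) := by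
  rw [hθ.measurableSet]
  refine ⟨((hS.measurableSet C).mp hC).1.inter ((hθ.measurableSet _).mp (leMem' hS hθ)).1,
    fun t => ?_⟩
  simp only [WithTop.coe_le_coe]
  have key : C ∩ {ω | S ω ≤ θ ω} ∩ {ω | θ ω ≤ t} =
      (C ∩ {ω | S ω ≤ t}) ∩ ({ω | S ω ≤ θ ω} ∩ {ω | θ ω ≤ t}) := by
    ext ω
    simp only [Set.mem_inter_iff, Set.mem_setOf_eq]
    constructor
    · rintro ⟨⟨h1, h2⟩, h3⟩; exact ⟨⟨h1, h2.trans h3⟩, h2, h3⟩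
    · rintro ⟨⟨h1, _⟩, h2, h3⟩; exact ⟨⟨h1, h2⟩, h3⟩
  rw [key]
  exact (mset_iff hS hC t).inter (mset_iff hθ (leMem' hS hθ) t)

end DSopt

end DSoptHelpers

section DSoptHelpers2

namespace DSopt

variable {m : MeasurableSpace Ω} {ℱ : Filtration ℝ m} {μ : Measure Ω} {T : ℝ}

/-- Conditional expectations w.r.t. `m'` of functions agreeing a.e. on `G ∈ m'`
agree a.e. on `G`. -/
lemma condexp_eq_on {m0 : MeasurableSpace Ω} {μ : Measure Ω} {m' : MeasurableSpace Ω}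
    (hm : m' ≤ m0) [SigmaFinite (μ.trim hm)] {G : Set Ω} (hG : MeasurableSet[m'] G)
    {f g : Ω → ℝ} (hf : Integrable f μ) (hg : Integrable g μ)
    (h : ∀ᵐ ω ∂μ, ω ∈ G → f ω = g ω) :
    ∀ᵐ ω ∂μ, ω ∈ G → (μ[f|m']) ω = (μ[g|m']) ω := by
  classical
  have hind : G.indicator f =ᵐ[μ] G.indicator g := by
    filter_upwards [h] with ω hω
    by_cases hG' : ω ∈ G
    · simp only [Set.indicator_of_mem hG', hω hG']
    · simp only [Set.indicator_of_notMem hG']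
  have h1 := condExp_indicator (m := m') hf hG
  have h2 := condExp_indicator (m := m') hg hG
  have h3 : μ[G.indicator f|m'] =ᵐ[μ] μ[G.indicator g|m'] := condExp_congr_ae hind
  filter_upwards [h1, h2, h3] with ω e1 e2 e3 hω
  have key : G.indicator (μ[f|m']) ω = G.indicator (μ[g|m']) ω := e1.symm.trans (e3.trans e2)
  simpa only [Set.indicator_of_mem hω] using key

/-- A set integral of an a.e.-positive function over a non-null set is positive. -/
lemma setIntegral_pos {m0 : MeasurableSpace Ω} {μ : Measure Ω} {h : Ω → ℝ}
    (hint : Integrable h μ) {B : Set Ω} (hB : MeasurableSet B) (hμB : μ B ≠ 0)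
    (hpos : ∀ ω ∈ B, 0 < h ω) :
    0 < ∫ ω in B, h ω ∂μ := by
  have h0 : 0 ≤ᵐ[μ.restrict B] h :=
    (ae_restrict_iff' hB).2 (Filter.Eventually.of_forall fun ω hω => (hpos ω hω).le)
  rw [integral_pos_iff_support_of_nonneg_ae h0 hint.restrict]
  have hle : μ B ≤ μ.restrict B (Function.support h) := by
    rw [Measure.restrict_apply' hB]
    exact measure_mono fun ω hω => ⟨(hpos ω hω).ne', hω⟩
  exact lt_of_lt_of_le (by simpa [pos_iff_ne_zero] using hμB) hle

/-- Comparison of conditional expectations via set integrals. -/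
lemma condexp_le_condexp_of_setIntegral_le {m0 : MeasurableSpace Ω} {μ : Measure Ω}
    {m' : MeasurableSpace Ω} (hm : m' ≤ m0) [SigmaFinite (μ.trim hm)]
    {X Y : Ω → ℝ} (hX : Integrable X μ) (hY : Integrable Y μ)
    (h : ∀ C : Set Ω, MeasurableSet[m'] C → ∫ ω in C, X ω ∂μ ≤ ∫ ω in C, Y ω ∂μ) :
    μ[X|m'] ≤ᵐ[μ] μ[Y|m'] := by
  set f := μ[X|m'] with hfdef
  set g := μ[Y|m'] with hgdef
  have hfm : Measurable[m'] f := stronglyMeasurable_condExp.measurable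
  have hgm : Measurable[m'] g := stronglyMeasurable_condExp.measurable
  have hCm : MeasurableSet[m'] {ω | g ω < f ω} := measurableSet_lt hgm hfm
  have hC0 : μ {ω | g ω < f ω} = 0 := by
    by_contra hne
    have hlt : 0 < ∫ ω in {ω | g ω < f ω}, (f ω - g ω) ∂μ :=
      setIntegral_pos (integrable_condExp.sub integrable_condExp) (hm _ hCm) hne
        (fun ω hω => sub_pos.2 hω)
    rw [integral_sub (integrable_condExp.restrict) (integrable_condExp.restrict)] at hlt
    have h1 : ∫ ω in {ω | g ω < f ω}, f ω ∂μ ≤ ∫ ω in {ω | g ω < f ω}, g ω ∂μ := by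
      calc ∫ ω in {ω | g ω < f ω}, f ω ∂μ = ∫ ω in {ω | g ω < f ω}, X ω ∂μ :=
            setIntegral_condExp hm hX hCm
        _ ≤ ∫ ω in {ω | g ω < f ω}, Y ω ∂μ := h _ hCm
        _ = ∫ ω in {ω | g ω < f ω}, g ω ∂μ := (setIntegral_condExp hm hY hCm).symm
    linarith
  have hae : ∀ᵐ ω ∂μ, ω ∉ {ω | g ω < f ω} := measure_eq_zero_iff_ae_notMem.mp hC0
  filter_upwards [hae] with ω hω
  exact not_lt.1 hω

/-- If `v` is an essential sup of `s` and each member of `s` is a.e. `≤ h` on `A`,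
then `v ≤ h` a.e. on `A`. -/
lemma essSup_le_on {m0 : MeasurableSpace Ω} {μ : Measure Ω} {s : Set (Ω → ℝ)} {v : Ω → ℝ}
    (hv : IsEssSupOf μ s v) {A : Set Ω} {h : Ω → ℝ}
    (hub : ∀ f ∈ s, ∀ᵐ ω ∂μ, ω ∈ A → f ω ≤ h ω) :
    ∀ᵐ ω ∂μ, ω ∈ A → v ω ≤ h ω := by
  classical
  have hg : ∀ f ∈ s, f ≤ᵐ[μ] A.piecewise h v := by
    intro f hf
    filter_upwards [hub f hf, hv.1 f hf] with ω h1 h2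
    by_cases hA : ω ∈ A
    · rw [Set.piecewise_eq_of_mem _ _ _ hA]; exact h1 hA
    · rw [Set.piecewise_eq_of_notMem _ _ _ hA]; exact h2
  filter_upwards [hv.2 _ hg] with ω hω hA
  rwa [Set.piecewise_eq_of_mem _ _ _ hA] at hω

/-- Integrability of the biadmissible reward. -/
lemma psi_int {ψ : (Ω → ℝ) → (Ω → ℝ) → Ω → ℝ} (hψ : Biadmissible ℱ μ T ψ)
    {Z : Ω → ℝ} (hZint : Integrable Z μ)
    (hZ : ∀ τ σ, IsStoppingTimeIn ℱ T τ → IsStoppingTimeIn ℱ T σ → ψ τ σ ≤ᵐ[μ] Z)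
    {τ σ : Ω → ℝ} (hτ : IsStoppingTimeIn ℱ T τ) (hσ : IsStoppingTimeIn ℱ T σ) :
    Integrable (ψ τ σ) μ := by
  have hmeas : Measurable (ψ τ σ) :=
    ((hψ.1 τ σ hτ hσ).1).mono (hτ.1.max hσ.1).measurableSpace_le le_rfl
  refine hZint.mono' hmeas.aestronglyMeasurable ?_
  filter_upwards [hZ τ σ hτ hσ] with ω hω
  rw [Real.norm_eq_abs, abs_of_nonneg ((hψ.1 τ σ hτ hσ).2 ω)]
  exact hω

end DSopt

end DSoptHelpers2

section DSoptHelpers3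

namespace DSopt

/-- An essential supremum of an upward-directed, uniformly integrably-bounded family
is the a.e. limit of an a.e.-monotone sequence of members. -/
lemma essSup_attained {m0 : MeasurableSpace Ω} {μ : Measure Ω} [IsProbabilityMeasure μ]
    {s : Set (Ω → ℝ)} {v ζ : Ω → ℝ} (hv : IsEssSupOf μ s v) (hne : s.Nonempty)
    (hint : ∀ f ∈ s, Integrable f μ) (hζ : Integrable ζ μ) (hbd : ∀ f ∈ s, f ≤ᵐ[μ] ζ)
    (hdir : ∀ f ∈ s, ∀ g ∈ s, ∃ h ∈ s, f ≤ᵐ[μ] h ∧ g ≤ᵐ[μ] h) :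
    ∃ F : ℕ → Ω → ℝ, (∀ n, F n ∈ s) ∧
      (∀ᵐ ω ∂μ, (Monotone fun n => F n ω) ∧
        Tendsto (fun n => F n ω) atTop (nhds (v ω))) := by
  classical
  set I : (Ω → ℝ) → ℝ := fun f => ∫ ω, f ω ∂μ with hI
  have hbdd : BddAbove (I '' s) := by
    refine ⟨I ζ, ?_⟩
    rintro y ⟨f, hf, rfl⟩
    exact integral_mono_ae (hint f hf) hζ (hbd f hf)
  have hbne : (I '' s).Nonempty := hne.image I
  set c := sSup (I '' s) with hc
  have hex : ∀ n : ℕ, ∃ f ∈ s, c - 1 / (n + 1) < I f := by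
    intro n
    have hlt : c - 1 / (n + 1 : ℝ) < c := by
      have : (0 : ℝ) < 1 / (n + 1) := by positivity
      linarith
    obtain ⟨y, ⟨f, hf, rfl⟩, hy⟩ := exists_lt_of_lt_csSup hbne hlt
    exact ⟨f, hf, hy⟩
  choose f₀ hf₀s hf₀ using hex
  have hstep : ∀ (p : ℕ × {g : Ω → ℝ // g ∈ s}),
      ∃ h : {g : Ω → ℝ // g ∈ s}, p.2.1 ≤ᵐ[μ] h.1 ∧ f₀ (p.1 + 1) ≤ᵐ[μ] h.1 := by
    rintro ⟨n, g, hg⟩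
    obtain ⟨h, hh, h1, h2⟩ := hdir g hg (f₀ (n + 1)) (hf₀s (n + 1))
    exact ⟨⟨h, hh⟩, h1, h2⟩
  choose step hstep1 hstep2 using hstep
  set Gs : ℕ → {g : Ω → ℝ // g ∈ s} :=
    fun n => Nat.rec ⟨f₀ 0, hf₀s 0⟩ (fun k g => step (k, g)) n with hGs_def
  set G : ℕ → Ω → ℝ := fun n => (Gs n).1 with hG_def
  have hGs : ∀ n, G n ∈ s := fun n => (Gs n).2
  have hGint : ∀ n, Integrable (G n) μ := fun n => hint _ (hGs n)
  have hmono : ∀ n, G n ≤ᵐ[μ] G (n + 1) := fun n => hstep1 (n, Gs n)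
  have hfle : ∀ n, f₀ n ≤ᵐ[μ] G n := by
    intro n
    cases n with
    | zero => exact Filter.Eventually.of_forall fun _ => le_rfl
    | succ k => exact hstep2 (k, Gs k)
  have hIG_lb : ∀ n, c - 1 / (n + 1) < I (G n) := fun n =>
    lt_of_lt_of_le (hf₀ n) (integral_mono_ae (hint _ (hf₀s n)) (hGint n) (hfle n))
  have hIG_ub : ∀ n, I (G n) ≤ c := fun n => le_csSup hbdd ⟨_, hGs n, rfl⟩
  have hmono_ae : ∀ᵐ ω ∂μ, ∀ n, G n ω ≤ G (n + 1) ω := ae_all_iff.2 hmono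
  have hbd_ae : ∀ᵐ ω ∂μ, ∀ n, G n ω ≤ ζ ω := ae_all_iff.2 fun n => hbd _ (hGs n)
  have hvle_ae : ∀ᵐ ω ∂μ, ∀ n, G n ω ≤ v ω := ae_all_iff.2 fun n => hv.1 _ (hGs n)
  set g : Ω → ℝ := fun ω => ⨆ n, G n ω with hgdef
  have htend : ∀ᵐ ω ∂μ, (Monotone fun n => G n ω) ∧
      Tendsto (fun n => G n ω) atTop (nhds (g ω)) := by
    filter_upwards [hmono_ae, hbd_ae] with ω h1' h2'
    have hm : Monotone fun n => G n ω := monotone_nat_of_le_succ h1'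
    refine ⟨hm, tendsto_atTop_ciSup hm ⟨ζ ω, ?_⟩⟩
    rintro y ⟨n, rfl⟩
    exact h2' n
  have hgm : AEMeasurable g μ :=
    AEMeasurable.iSup fun n => (hGint n).aestronglyMeasurable.aemeasurable
  -- `g` is an a.e. upper bound of `s`
  have hub : ∀ f' ∈ s, f' ≤ᵐ[μ] g := by
    intro f' hf'
    have hplus : ∀ n, I (fun ω => max (f' ω - G n ω) 0) < 1 / (n + 1) := by
      intro n
      obtain ⟨h, hh, ha, hb⟩ := hdir f' hf' (G n) (hGs n)
      have hsupint : Integrable (fun ω => max (f' ω) (G n ω)) μ := (hint f' hf').sup (hGint n)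
      have hle1 : I (fun ω => max (f' ω) (G n ω)) ≤ c := by
        refine le_trans (integral_mono_ae hsupint (hint h hh) ?_) (le_csSup hbdd ⟨h, hh, rfl⟩)
        filter_upwards [ha, hb] with ω e1 e2
        exact max_le e1 e2
      have hid : (fun ω => max (f' ω - G n ω) 0) =
          fun ω => max (f' ω) (G n ω) - G n ω := by
        funext ω
        rcases le_total (f' ω) (G n ω) with h' | h'
        · rw [max_eq_right h', max_eq_right (by linarith)]; linarith
        · rw [max_eq_left h', max_eq_left (by linarith)]
      have : I (fun ω => max (f' ω - G n ω) 0) =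
          I (fun ω => max (f' ω) (G n ω)) - I (G n) := by
        rw [hid, hI]
        exact integral_sub hsupint (hGint n)
      rw [this]
      have := hIG_lb n
      linarith
    -- dominated convergence
    have hGlim : ∀ᵐ ω ∂μ, Tendsto (fun n => max (f' ω - G n ω) 0) atTop
        (nhds (max (f' ω - g ω) 0)) := by
      filter_upwards [htend] with ω hω
      exact (tendsto_const_nhds.sub hω.2).max tendsto_const_nhds
    have hmeasn : ∀ n, AEStronglyMeasurable (fun ω => max (f' ω - G n ω) 0) μ := by
      intro n
      exact (((hint f' hf').aestronglyMeasurable.aemeasurable.sub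
        (hGint n).aestronglyMeasurable.aemeasurable).max aemeasurable_const).aestronglyMeasurable
    have hboundint : Integrable (fun ω => |f' ω - G 0 ω|) μ := ((hint f' hf').sub (hGint 0)).abs
    have hbound : ∀ n, ∀ᵐ ω ∂μ, ‖max (f' ω - G n ω) 0‖ ≤ |f' ω - G 0 ω| := by
      intro n
      filter_upwards [hmono_ae] with ω hmω
      have h0n : G 0 ω ≤ G n ω := (monotone_nat_of_le_succ hmω) (Nat.zero_le n)
      rw [Real.norm_eq_abs, abs_of_nonneg (le_max_right _ _)]
      refine le_trans (max_le_max (sub_le_sub_left h0n (f' ω)) le_rfl) ?_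
      exact max_le (le_abs_self _) (abs_nonneg _)
    have hDCT := tendsto_integral_of_dominated_convergence (μ := μ)
      (F := fun n ω => max (f' ω - G n ω) 0) (f := fun ω => max (f' ω - g ω) 0)
      (bound := fun ω => |f' ω - G 0 ω|) hmeasn hboundint hbound hGlim
    have hL0 : ∫ ω, max (f' ω - g ω) 0 ∂μ = 0 := by
      refine le_antisymm ?_ ?_
      · refine le_of_tendsto_of_tendsto' hDCT tendsto_one_div_add_atTop_nhds_zero_nat ?_
        exact fun n => (hplus n).le
      · refine ge_of_tendsto' hDCT fun n => ?_
        exact integral_nonneg fun ω => le_max_right _ _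
    have hlimint : Integrable (fun ω => max (f' ω - g ω) 0) μ := by
      refine hboundint.mono' ((((hint f' hf').aestronglyMeasurable.aemeasurable.sub
        hgm).max aemeasurable_const).aestronglyMeasurable) ?_
      filter_upwards [hmono_ae, hbd_ae] with ω hmω hbω
      have hG0g : G 0 ω ≤ g ω := by
        have hbb : BddAbove (Set.range fun n => G n ω) := by
          refine ⟨ζ ω, ?_⟩
          rintro y ⟨n, rfl⟩
          exact hbω n
        exact le_ciSup (f := fun n => G n ω) hbb 0
      rw [Real.norm_eq_abs, abs_of_nonneg (le_max_right _ _)]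
      refine le_trans (max_le_max (sub_le_sub_left hG0g (f' ω)) le_rfl) ?_
      exact max_le (le_abs_self _) (abs_nonneg _)
    have hzero : (fun ω => max (f' ω - g ω) 0) =ᵐ[μ] 0 :=
      (integral_eq_zero_iff_of_nonneg_ae
        (Filter.Eventually.of_forall fun ω => le_max_right _ _) hlimint).mp hL0
    filter_upwards [hzero] with ω hω
    have : max (f' ω - g ω) 0 = 0 := hω
    by_contra hcon
    push_neg at hcon
    rw [max_eq_left (by linarith)] at this
    linarith
  have hvg : v ≤ᵐ[μ] g := hv.2 g hub
  have hgv : g ≤ᵐ[μ] v := by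
    filter_upwards [hvle_ae] with ω h1'
    exact ciSup_le fun n => h1' n
  refine ⟨G, hGs, ?_⟩
  filter_upwards [htend, hvg, hgv] with ω hω h1' h2'
  have hgveq : g ω = v ω := le_antisymm h2' h1'
  exact ⟨hω.1, hgveq ▸ hω.2⟩

end DSopt

end DSoptHelpers3

section DSoptHelpers4

namespace DSopt

variable {m : MeasurableSpace Ω} {ℱ : Filtration ℝ m} {μ : Measure Ω} [IsProbabilityMeasure μ]
  {T : ℝ} {ψ : (Ω → ℝ) → (Ω → ℝ) → Ω → ℝ} {Z : Ω → ℝ}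

lemma u1Set_props (hψ : Biadmissible ℱ μ T ψ) (hZint : Integrable Z μ)
    (hZ : ∀ τ σ, IsStoppingTimeIn ℱ T τ → IsStoppingTimeIn ℱ T σ → ψ τ σ ≤ᵐ[μ] Z)
    {θ : Ω → ℝ} (hθ : IsStoppingTimeIn ℱ T θ) :
    ∀ f ∈ u1Set ℱ μ T ψ θ hθ.1,
      Integrable f μ ∧ f ≤ᵐ[μ] μ[Z|hθ.1.measurableSpace] ∧ 0 ≤ᵐ[μ] f := by
  rintro f ⟨τ, hτ, rfl⟩
  exact ⟨integrable_condExp,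
    condExp_mono (psi_int hψ hZint hZ hτ.1 hθ) hZint (hZ τ θ hτ.1 hθ),
    condExp_nonneg (Filter.Eventually.of_forall (hψ.1 τ θ hτ.1 hθ).2)⟩

lemma u2Set_props (hψ : Biadmissible ℱ μ T ψ) (hZint : Integrable Z μ)
    (hZ : ∀ τ σ, IsStoppingTimeIn ℱ T τ → IsStoppingTimeIn ℱ T σ → ψ τ σ ≤ᵐ[μ] Z)
    {θ : Ω → ℝ} (hθ : IsStoppingTimeIn ℱ T θ) :
    ∀ f ∈ u2Set ℱ μ T ψ θ hθ.1,
      Integrable f μ ∧ f ≤ᵐ[μ] μ[Z|hθ.1.measurableSpace] ∧ 0 ≤ᵐ[μ] f := by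
  rintro f ⟨τ, hτ, rfl⟩
  exact ⟨integrable_condExp,
    condExp_mono (psi_int hψ hZint hZ hθ hτ.1) hZint (hZ θ τ hθ hτ.1),
    condExp_nonneg (Filter.Eventually.of_forall (hψ.1 θ τ hθ hτ.1).2)⟩

lemma u1Set_directed (hψ : Biadmissible ℱ μ T ψ) (hZint : Integrable Z μ)
    (hZ : ∀ τ σ, IsStoppingTimeIn ℱ T τ → IsStoppingTimeIn ℱ T σ → ψ τ σ ≤ᵐ[μ] Z)
    {θ : Ω → ℝ} (hθ : IsStoppingTimeIn ℱ T θ) :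
    ∀ f ∈ u1Set ℱ μ T ψ θ hθ.1, ∀ g ∈ u1Set ℱ μ T ψ θ hθ.1,
      ∃ h ∈ u1Set ℱ μ T ψ θ hθ.1, f ≤ᵐ[μ] h ∧ g ≤ᵐ[μ] h := by
  classical
  rintro f ⟨τ, hτ, rfl⟩ g ⟨τ', hτ', rfl⟩
  have hmθ : hθ.1.measurableSpace ≤ m := hθ.1.measurableSpace_le
  set E := {ω | (μ[ψ τ' θ|hθ.1.measurableSpace]) ω ≤ (μ[ψ τ θ|hθ.1.measurableSpace]) ω}
    with hEdef
  have hE : MeasurableSet[hθ.1.measurableSpace] E :=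
    measurableSet_le stronglyMeasurable_condExp.measurable stronglyMeasurable_condExp.measurable
  set α := fun ω => max (τ ω) (θ ω) with hα
  set β := fun ω => max (τ' ω) (θ ω) with hβ
  have hαst : IsStoppingTime ℱ (fun ω => (α ω : WithTop ℝ)) := stMax hτ.1.1 hθ.1
  have hβst : IsStoppingTime ℱ (fun ω => (β ω : WithTop ℝ)) := stMax hτ'.1.1 hθ.1
  set η := E.piecewise α β with hη
  have hηst : IsStoppingTime ℱ (fun ω => (η ω : WithTop ℝ)) :=
    pasteST hθ.1 hβst hαst hE (fun ω _ => le_max_right (τ' ω) (θ ω)) (fun ω => le_max_right (τ ω) (θ ω))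
  have hηin : IsStoppingTimeIn ℱ T η := by
    refine ⟨hηst, fun ω => ?_⟩
    by_cases hω : ω ∈ E
    · rw [hη, Set.piecewise_eq_of_mem _ _ _ hω]
      exact ⟨le_max_of_le_right (hθ.2 ω).1, max_le (hτ.1.2 ω).2 (hθ.2 ω).2⟩
    · rw [hη, Set.piecewise_eq_of_notMem _ _ _ hω]
      exact ⟨le_max_of_le_right (hθ.2 ω).1, max_le (hτ'.1.2 ω).2 (hθ.2 ω).2⟩
  have hθη : ∀ ω, θ ω ≤ η ω := by
    intro ω
    by_cases hω : ω ∈ E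
    · rw [hη, Set.piecewise_eq_of_mem _ _ _ hω]; exact le_max_right _ _
    · rw [hη, Set.piecewise_eq_of_notMem _ _ _ hω]; exact le_max_right _ _
  have hηmem : MemTS ℱ μ T θ η := ⟨hηin, Filter.Eventually.of_forall hθη⟩
  have hon : ∀ᵐ ω ∂μ, ω ∈ E → ψ η θ ω = ψ τ θ ω := by
    filter_upwards [hψ.2 η τ θ θ hηin hτ.1 hθ hθ, hτ.2] with ω himp hle hωE
    exact himp (by rw [hη, Set.piecewise_eq_of_mem _ _ _ hωE, hα]; exact max_eq_left hle) rfl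
  have hoff : ∀ᵐ ω ∂μ, ω ∈ Eᶜ → ψ η θ ω = ψ τ' θ ω := by
    filter_upwards [hψ.2 η τ' θ θ hηin hτ'.1 hθ hθ, hτ'.2] with ω himp hle hωE
    exact himp (by rw [hη, Set.piecewise_eq_of_notMem _ _ _ hωE, hβ]; exact max_eq_left hle) rfl
  have he1 := condexp_eq_on hmθ hE (psi_int hψ hZint hZ hηin hθ)
    (psi_int hψ hZint hZ hτ.1 hθ) hon
  have he2 := condexp_eq_on hmθ hE.compl (psi_int hψ hZint hZ hηin hθ)
    (psi_int hψ hZint hZ hτ'.1 hθ) hoff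
  refine ⟨μ[ψ η θ|hθ.1.measurableSpace], ⟨η, hηmem, rfl⟩, ?_, ?_⟩
  · filter_upwards [he1, he2] with ω h1 h2
    by_cases hω : ω ∈ E
    · exact (h1 hω).ge
    · rw [h2 hω]
      exact le_of_not_ge hω
  · filter_upwards [he1, he2] with ω h1 h2
    by_cases hω : ω ∈ E
    · rw [h1 hω]
      exact hω
    · exact (h2 hω).ge

lemma u2Set_directed (hψ : Biadmissible ℱ μ T ψ) (hZint : Integrable Z μ)
    (hZ : ∀ τ σ, IsStoppingTimeIn ℱ T τ → IsStoppingTimeIn ℱ T σ → ψ τ σ ≤ᵐ[μ] Z)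
    {θ : Ω → ℝ} (hθ : IsStoppingTimeIn ℱ T θ) :
    ∀ f ∈ u2Set ℱ μ T ψ θ hθ.1, ∀ g ∈ u2Set ℱ μ T ψ θ hθ.1,
      ∃ h ∈ u2Set ℱ μ T ψ θ hθ.1, f ≤ᵐ[μ] h ∧ g ≤ᵐ[μ] h := by
  classical
  rintro f ⟨τ, hτ, rfl⟩ g ⟨τ', hτ', rfl⟩
  have hmθ : hθ.1.measurableSpace ≤ m := hθ.1.measurableSpace_le
  set E := {ω | (μ[ψ θ τ'|hθ.1.measurableSpace]) ω ≤ (μ[ψ θ τ|hθ.1.measurableSpace]) ω}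
    with hEdef
  have hE : MeasurableSet[hθ.1.measurableSpace] E :=
    measurableSet_le stronglyMeasurable_condExp.measurable stronglyMeasurable_condExp.measurable
  set α := fun ω => max (τ ω) (θ ω) with hα
  set β := fun ω => max (τ' ω) (θ ω) with hβ
  have hαst : IsStoppingTime ℱ (fun ω => (α ω : WithTop ℝ)) := stMax hτ.1.1 hθ.1
  have hβst : IsStoppingTime ℱ (fun ω => (β ω : WithTop ℝ)) := stMax hτ'.1.1 hθ.1
  set η := E.piecewise α β with hη
  have hηst : IsStoppingTime ℱ (fun ω => (η ω : WithTop ℝ)) :=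
    pasteST hθ.1 hβst hαst hE (fun ω _ => le_max_right (τ' ω) (θ ω)) (fun ω => le_max_right (τ ω) (θ ω))
  have hηin : IsStoppingTimeIn ℱ T η := by
    refine ⟨hηst, fun ω => ?_⟩
    by_cases hω : ω ∈ E
    · rw [hη, Set.piecewise_eq_of_mem _ _ _ hω]
      exact ⟨le_max_of_le_right (hθ.2 ω).1, max_le (hτ.1.2 ω).2 (hθ.2 ω).2⟩
    · rw [hη, Set.piecewise_eq_of_notMem _ _ _ hω]
      exact ⟨le_max_of_le_right (hθ.2 ω).1, max_le (hτ'.1.2 ω).2 (hθ.2 ω).2⟩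
  have hθη : ∀ ω, θ ω ≤ η ω := by
    intro ω
    by_cases hω : ω ∈ E
    · rw [hη, Set.piecewise_eq_of_mem _ _ _ hω]; exact le_max_right _ _
    · rw [hη, Set.piecewise_eq_of_notMem _ _ _ hω]; exact le_max_right _ _
  have hηmem : MemTS ℱ μ T θ η := ⟨hηin, Filter.Eventually.of_forall hθη⟩
  have hon : ∀ᵐ ω ∂μ, ω ∈ E → ψ θ η ω = ψ θ τ ω := by
    filter_upwards [hψ.2 θ θ η τ hθ hθ hηin hτ.1, hτ.2] with ω himp hle hωE
    exact himp rfl (by rw [hη, Set.piecewise_eq_of_mem _ _ _ hωE, hα]; exact max_eq_left hle)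
  have hoff : ∀ᵐ ω ∂μ, ω ∈ Eᶜ → ψ θ η ω = ψ θ τ' ω := by
    filter_upwards [hψ.2 θ θ η τ' hθ hθ hηin hτ'.1, hτ'.2] with ω himp hle hωE
    exact himp rfl (by rw [hη, Set.piecewise_eq_of_notMem _ _ _ hωE, hβ]; exact max_eq_left hle)
  have he1 := condexp_eq_on hmθ hE (psi_int hψ hZint hZ hθ hηin)
    (psi_int hψ hZint hZ hθ hτ.1) hon
  have he2 := condexp_eq_on hmθ hE.compl (psi_int hψ hZint hZ hθ hηin)
    (psi_int hψ hZint hZ hθ hτ'.1) hoff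
  refine ⟨μ[ψ θ η|hθ.1.measurableSpace], ⟨η, hηmem, rfl⟩, ?_, ?_⟩
  · filter_upwards [he1, he2] with ω h1 h2
    by_cases hω : ω ∈ E
    · exact (h1 hω).ge
    · rw [h2 hω]
      exact le_of_not_ge hω
  · filter_upwards [he1, he2] with ω h1 h2
    by_cases hω : ω ∈ E
    · rw [h1 hω]
      exact hω
    · exact (h2 hω).ge

end DSopt

end DSoptHelpers4

section DSoptHelpers5

namespace DSopt

variable {m : MeasurableSpace Ω} {ℱ : Filtration ℝ m} {μ : Measure Ω} [IsProbabilityMeasure μ]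
  {T : ℝ} {ψ : (Ω → ℝ) → (Ω → ℝ) → Ω → ℝ} {Z : Ω → ℝ}

/-- Core necessary-condition argument: if `(τ₁,τ₂)` is optimal for `v(S)`, `ν` is a
stopping time, and `(α₁,α₂)` is a competing pair that dominates `ν` pointwise and can
be pasted with `(τ₁,τ₂)` along subsets of `A'`, then
`E[ψ(α₁,α₂)|F_ν] ≤ E[ψ(τ₁,τ₂)|F_ν]` a.e. on `A'`. -/
lemma coreLe (hψ : Biadmissible ℱ μ T ψ) (hZint : Integrable Z μ)
    (hZ : ∀ τ σ, IsStoppingTimeIn ℱ T τ → IsStoppingTimeIn ℱ T σ → ψ τ σ ≤ᵐ[μ] Z)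
    {v : (Ω → ℝ) → Ω → ℝ} (hv : IsPairValueFam ℱ μ T ψ v)
    {S : Ω → ℝ} (hS : IsStoppingTimeIn ℱ T S)
    {τ₁ τ₂ : Ω → ℝ} (hτ₁ : MemTS ℱ μ T S τ₁) (hτ₂ : MemTS ℱ μ T S τ₂)
    (hopt : v S =ᵐ[μ] μ[ψ τ₁ τ₂|hS.1.measurableSpace])
    {ν α₁ α₂ : Ω → ℝ} (hν : IsStoppingTime ℱ (fun ω => (ν ω : WithTop ℝ)))
    (hα₁ : IsStoppingTimeIn ℱ T α₁) (hα₂ : IsStoppingTimeIn ℱ T α₂)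
    (hνα₁ : ∀ ω, ν ω ≤ α₁ ω) (hνα₂ : ∀ ω, ν ω ≤ α₂ ω)
    (hSα₁ : ∀ᵐ ω ∂μ, S ω ≤ α₁ ω) (hSα₂ : ∀ᵐ ω ∂μ, S ω ≤ α₂ ω)
    {A' : Set Ω} (hA' : MeasurableSet[hν.measurableSpace] A')
    (hA'1 : A' ⊆ {ω | ν ω ≤ τ₁ ω}) (hA'2 : A' ⊆ {ω | ν ω ≤ τ₂ ω}) :
    ∀ᵐ ω ∂μ, ω ∈ A' →
      (μ[ψ α₁ α₂|hν.measurableSpace]) ω ≤ (μ[ψ τ₁ τ₂|hν.measurableSpace]) ω := by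
  classical
  have hmν : hν.measurableSpace ≤ m := hν.measurableSpace_le
  have hmS : hS.1.measurableSpace ≤ m := hS.1.measurableSpace_le
  set f := μ[ψ α₁ α₂|hν.measurableSpace] with hf_def
  set h' := μ[ψ τ₁ τ₂|hν.measurableSpace] with hh'_def
  set B := A' ∩ {ω | h' ω < f ω} with hBdef
  have hB : MeasurableSet[hν.measurableSpace] B :=
    hA'.inter (measurableSet_lt stronglyMeasurable_condExp.measurable
      stronglyMeasurable_condExp.measurable)
  have hBm : MeasurableSet B := hmν _ hB
  have hB0 : μ B = 0 := by
    by_contra hμB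
    set η₁ := B.piecewise α₁ τ₁ with hη₁def
    set η₂ := B.piecewise α₂ τ₂ with hη₂def
    have hη₁st : IsStoppingTime ℱ (fun ω => (η₁ ω : WithTop ℝ)) :=
      pasteST hν hτ₁.1.1 hα₁.1 hB (fun ω hω => hA'1 hω.1) hνα₁
    have hη₂st : IsStoppingTime ℱ (fun ω => (η₂ ω : WithTop ℝ)) :=
      pasteST hν hτ₂.1.1 hα₂.1 hB (fun ω hω => hA'2 hω.1) hνα₂
    have hη₁in : IsStoppingTimeIn ℱ T η₁ := by
      refine ⟨hη₁st, fun ω => ?_⟩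
      by_cases hω : ω ∈ B
      · rw [hη₁def, Set.piecewise_eq_of_mem _ _ _ hω]; exact hα₁.2 ω
      · rw [hη₁def, Set.piecewise_eq_of_notMem _ _ _ hω]; exact hτ₁.1.2 ω
    have hη₂in : IsStoppingTimeIn ℱ T η₂ := by
      refine ⟨hη₂st, fun ω => ?_⟩
      by_cases hω : ω ∈ B
      · rw [hη₂def, Set.piecewise_eq_of_mem _ _ _ hω]; exact hα₂.2 ω
      · rw [hη₂def, Set.piecewise_eq_of_notMem _ _ _ hω]; exact hτ₂.1.2 ω
    have hη₁mem : MemTS ℱ μ T S η₁ := by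
      refine ⟨hη₁in, ?_⟩
      filter_upwards [hSα₁, hτ₁.2] with ω e1 e2
      by_cases hω : ω ∈ B
      · rw [hη₁def, Set.piecewise_eq_of_mem _ _ _ hω]; exact e1
      · rw [hη₁def, Set.piecewise_eq_of_notMem _ _ _ hω]; exact e2
    have hη₂mem : MemTS ℱ μ T S η₂ := by
      refine ⟨hη₂in, ?_⟩
      filter_upwards [hSα₂, hτ₂.2] with ω e1 e2
      by_cases hω : ω ∈ B
      · rw [hη₂def, Set.piecewise_eq_of_mem _ _ _ hω]; exact e1
      · rw [hη₂def, Set.piecewise_eq_of_notMem _ _ _ hω]; exact e2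
    have hpair_int : Integrable (ψ η₁ η₂) μ := psi_int hψ hZint hZ hη₁in hη₂in
    have hτint : Integrable (ψ τ₁ τ₂) μ := psi_int hψ hZint hZ hτ₁.1 hτ₂.1
    have hαint : Integrable (ψ α₁ α₂) μ := psi_int hψ hZint hZ hα₁ hα₂
    have hvS : μ[ψ η₁ η₂|hS.1.measurableSpace] ≤ᵐ[μ] v S :=
      (hv S hS).1 _ ⟨η₁, η₂, hη₁mem, hη₂mem, rfl⟩
    have hOIL : ∫ ω, ψ η₁ η₂ ω ∂μ ≤ ∫ ω, ψ τ₁ τ₂ ω ∂μ := by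
      have hcmp : μ[ψ η₁ η₂|hS.1.measurableSpace] ≤ᵐ[μ] μ[ψ τ₁ τ₂|hS.1.measurableSpace] := by
        filter_upwards [hvS, hopt] with ω e1 e2
        exact e1.trans (le_of_eq e2)
      calc ∫ ω, ψ η₁ η₂ ω ∂μ = ∫ ω, (μ[ψ η₁ η₂|hS.1.measurableSpace]) ω ∂μ :=
            (integral_condExp hmS).symm
        _ ≤ ∫ ω, (μ[ψ τ₁ τ₂|hS.1.measurableSpace]) ω ∂μ :=
            integral_mono_ae integrable_condExp integrable_condExp hcmp
        _ = ∫ ω, ψ τ₁ τ₂ ω ∂μ := integral_condExp hmS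
    have honB : ∀ᵐ ω ∂μ, ω ∈ B → ψ η₁ η₂ ω = ψ α₁ α₂ ω := by
      filter_upwards [hψ.2 η₁ α₁ η₂ α₂ hη₁in hα₁ hη₂in hα₂] with ω himp hω
      exact himp (by rw [hη₁def]; exact Set.piecewise_eq_of_mem _ _ _ hω)
        (by rw [hη₂def]; exact Set.piecewise_eq_of_mem _ _ _ hω)
    have hoffB : ∀ᵐ ω ∂μ, ω ∈ Bᶜ → ψ η₁ η₂ ω = ψ τ₁ τ₂ ω := by
      filter_upwards [hψ.2 η₁ τ₁ η₂ τ₂ hη₁in hτ₁.1 hη₂in hτ₂.1] with ω himp hω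
      exact himp (by rw [hη₁def]; exact Set.piecewise_eq_of_notMem _ _ _ hω)
        (by rw [hη₂def]; exact Set.piecewise_eq_of_notMem _ _ _ hω)
    have hsplit : ∫ ω, ψ η₁ η₂ ω ∂μ =
        (∫ ω in B, ψ α₁ α₂ ω ∂μ) + ∫ ω in Bᶜ, ψ τ₁ τ₂ ω ∂μ := by
      rw [← integral_add_compl hBm hpair_int]
      congr 1
      · exact setIntegral_congr_ae hBm honB
      · exact setIntegral_congr_ae hBm.compl hoffB
    have hsplit2 : ∫ ω, ψ τ₁ τ₂ ω ∂μ =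
        (∫ ω in B, ψ τ₁ τ₂ ω ∂μ) + ∫ ω in Bᶜ, ψ τ₁ τ₂ ω ∂μ :=
      (integral_add_compl hBm hτint).symm
    have hBle : ∫ ω in B, ψ α₁ α₂ ω ∂μ ≤ ∫ ω in B, ψ τ₁ τ₂ ω ∂μ := by
      rw [hsplit, hsplit2] at hOIL
      linarith
    have hcond : ∫ ω in B, f ω ∂μ ≤ ∫ ω in B, h' ω ∂μ := by
      rw [hf_def, hh'_def, setIntegral_condExp hmν hαint hB, setIntegral_condExp hmν hτint hB]
      exact hBle
    have hpos : 0 < ∫ ω in B, (f ω - h' ω) ∂μ :=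
      setIntegral_pos (integrable_condExp.sub integrable_condExp) hBm hμB
        (fun ω hω => sub_pos.2 hω.2)
    rw [integral_sub integrable_condExp.restrict integrable_condExp.restrict] at hpos
    linarith
  filter_upwards [measure_eq_zero_iff_ae_notMem.mp hB0] with ω hω hA
  by_contra hcon
  exact hω ⟨hA, not_le.1 hcon⟩

end DSopt

end DSoptHelpers5

/-- **Proposition 2.2 (Necessary condition of optimality).** If `(τ₁*, τ₂*)` is optimal
for `v(S)` then, with `A = {τ₁* ≤ τ₂*}`: (1) `τ₁* ∧ τ₂*` is optimal for `u(S)`;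
(2) `τ₂*` is optimal for `u₂(τ₁*)` a.s. on `A`; (3) `τ₁*` is optimal for `u₁(τ₂*)`
a.s. on `Aᶜ`; moreover `A ⊆ {u₁(τ₁* ∧ τ₂*) ≤ u₂(τ₁* ∧ τ₂*)}` a.s. -/
theorem double_stopping_necessary_condition {m : MeasurableSpace Ω}
    (ℱ : Filtration ℝ m) (μ : Measure Ω) [IsProbabilityMeasure μ]
    (T : ℝ) (hT : 0 < T)
    (ψ : (Ω → ℝ) → (Ω → ℝ) → Ω → ℝ) (hψ : Biadmissible ℱ μ T ψ)
    -- `E[ess sup_{θ,S} ψ(θ,S)] < ∞`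
    (Z : Ω → ℝ) (hZint : Integrable Z μ)
    (hZ : ∀ τ σ, IsStoppingTimeIn ℱ T τ → IsStoppingTimeIn ℱ T σ → ψ τ σ ≤ᵐ[μ] Z)
    (u₁ u₂ : (Ω → ℝ) → Ω → ℝ)
    (hu₁ : IsU1Fam ℱ μ T ψ u₁) (hu₂ : IsU2Fam ℱ μ T ψ u₂)
    (v u : (Ω → ℝ) → Ω → ℝ)
    (hv : IsPairValueFam ℱ μ T ψ v)
    (hu : ∀ S (hS : IsStoppingTimeIn ℱ T S),
      IsEssSupOf μ (valueSet ℱ μ T (fun θ => u₁ θ ⊔ u₂ θ) S hS.1) (u S))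
    (S : Ω → ℝ) (hS : IsStoppingTimeIn ℱ T S)
    (τ₁ τ₂ : Ω → ℝ) (hτ₁ : MemTS ℱ μ T S τ₁) (hτ₂ : MemTS ℱ μ T S τ₂)
    (hopt : v S =ᵐ[μ] μ[ψ τ₁ τ₂ | hS.1.measurableSpace]) :
    -- (1) `τ₁ ∧ τ₂` is optimal for `u(S)`
    (u S =ᵐ[μ] μ[u₁ (τ₁ ⊓ τ₂) ⊔ u₂ (τ₁ ⊓ τ₂) | hS.1.measurableSpace]) ∧
    -- (2) `τ₂` is optimal for `u₂(τ₁)` a.s. on `A = {τ₁ ≤ τ₂}`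
    (∀ᵐ ω ∂μ, τ₁ ω ≤ τ₂ ω →
      u₂ τ₁ ω = (μ[ψ τ₁ τ₂ | hτ₁.1.1.measurableSpace]) ω) ∧
    -- (3) `τ₁` is optimal for `u₁(τ₂)` a.s. on `Aᶜ`
    (∀ᵐ ω ∂μ, ¬ τ₁ ω ≤ τ₂ ω →
      u₁ τ₂ ω = (μ[ψ τ₁ τ₂ | hτ₂.1.1.measurableSpace]) ω) ∧
    -- `A ⊆ B`
    (∀ᵐ ω ∂μ, τ₁ ω ≤ τ₂ ω → u₁ (τ₁ ⊓ τ₂) ω ≤ u₂ (τ₁ ⊓ τ₂) ω) := by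
  classical
  obtain ⟨⟨hτ1, hicc1⟩, hSτ1⟩ := hτ₁
  obtain ⟨⟨hτ2, hicc2⟩, hSτ2⟩ := hτ₂
  have hτ₁ : MemTS ℱ μ T S τ₁ := ⟨⟨hτ1, hicc1⟩, hSτ1⟩
  have hτ₂ : MemTS ℱ μ T S τ₂ := ⟨⟨hτ2, hicc2⟩, hSτ2⟩
  have hmS : hS.1.measurableSpace ≤ m := hS.1.measurableSpace_le
  have hm1 : hτ1.measurableSpace ≤ m := hτ1.measurableSpace_le
  have hm2 : hτ2.measurableSpace ≤ m := hτ2.measurableSpace_le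
  -- the minimum stopping time
  have hθst : IsStoppingTime ℱ (fun ω => ((τ₁ ⊓ τ₂) ω : WithTop ℝ)) := DSopt.stMin hτ1 hτ2
  have hmθ : hθst.measurableSpace ≤ m := hθst.measurableSpace_le
  have hθin : IsStoppingTimeIn ℱ T (τ₁ ⊓ τ₂) :=
    ⟨hθst, fun ω => ⟨le_min (hicc1 ω).1 (hicc2 ω).1, min_le_of_left_le (hicc1 ω).2⟩⟩
  have hθmem : MemTS ℱ μ T S (τ₁ ⊓ τ₂) := by
    refine ⟨hθin, ?_⟩
    filter_upwards [hSτ1, hSτ2] with ω e1 e2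
    exact le_min e1 e2
  set A := {ω | τ₁ ω ≤ τ₂ ω} with hAdef
  have hA1 : MeasurableSet[hτ1.measurableSpace] A := DSopt.leMem hτ1 hτ2
  have hA2 : MeasurableSet[hτ2.measurableSpace] A := DSopt.leMem' hτ1 hτ2
  have hAθ : MeasurableSet[hθst.measurableSpace] A := by
    rw [hθst.measurableSet]
    refine ⟨((hτ1.measurableSet A).mp hA1).1, fun t => ?_⟩
    simp only [WithTop.coe_le_coe]
    have hAt : A ∩ {ω | (τ₁ ⊓ τ₂) ω ≤ t} = A ∩ {ω | τ₁ ω ≤ t} := by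
      ext ω
      simp only [Set.mem_inter_iff, Set.mem_setOf_eq, Pi.inf_apply]
      constructor
      · rintro ⟨h1, h2⟩
        refine ⟨h1, ?_⟩
        rwa [inf_eq_left.2 h1] at h2
      · rintro ⟨h1, h2⟩
        refine ⟨h1, ?_⟩
        rw [inf_eq_left.2 h1]
        exact h2
    rw [hAt]
    exact DSopt.mset_iff hτ1 hA1 t
  have hτint : Integrable (ψ τ₁ τ₂) μ := DSopt.psi_int hψ hZint hZ hτ₁.1 hτ₂.1
  -- Claim (2), ≤ half (core)
  have hC2le : ∀ τ, MemTS ℱ μ T τ₁ τ → ∀ᵐ ω ∂μ, ω ∈ A →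
      (μ[ψ τ₁ τ|hτ1.measurableSpace]) ω ≤ (μ[ψ τ₁ τ₂|hτ1.measurableSpace]) ω := by
    intro τ hτ
    have hα₂in : IsStoppingTimeIn ℱ T (fun ω => max (τ ω) (τ₁ ω)) :=
      ⟨DSopt.stMax hτ.1.1 hτ1, fun ω => ⟨le_max_of_le_right (hicc1 ω).1,
        max_le (hτ.1.2 ω).2 (hicc1 ω).2⟩⟩
    have hcore := DSopt.coreLe hψ hZint hZ hv hS hτ₁ hτ₂ hopt hτ1 hτ₁.1 hα₂in
      (fun ω => le_rfl) (fun ω => le_max_right (τ ω) (τ₁ ω))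
      hSτ1 (by filter_upwards [hSτ1] with ω e; exact le_trans e (le_max_right _ _))
      hA1 (fun ω _ => show τ₁ ω ≤ τ₁ ω from le_rfl) (fun ω hω => hω)
    have hcongr : μ[ψ τ₁ (fun ω => max (τ ω) (τ₁ ω))|hτ1.measurableSpace]
        =ᵐ[μ] μ[ψ τ₁ τ|hτ1.measurableSpace] := by
      refine condExp_congr_ae ?_
      filter_upwards [hψ.2 τ₁ τ₁ (fun ω => max (τ ω) (τ₁ ω)) τ hτ₁.1 hτ₁.1 hα₂in hτ.1, hτ.2]
        with ω himp hle
      exact himp rfl (max_eq_left hle)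
    filter_upwards [hcore, hcongr] with ω h1 h2 hA'
    rw [← h2]
    exact h1 hA'
  have hC2 : ∀ᵐ ω ∂μ, ω ∈ A → u₂ τ₁ ω ≤ (μ[ψ τ₁ τ₂|hτ1.measurableSpace]) ω := by
    refine DSopt.essSup_le_on (hu₂ τ₁ hτ₁.1).2 ?_
    rintro f ⟨τ, hτ, rfl⟩
    exact hC2le τ hτ
  have hC2ge : ∀ᵐ ω ∂μ, ω ∈ A → (μ[ψ τ₁ τ₂|hτ1.measurableSpace]) ω ≤ u₂ τ₁ ω := by
    have hσin : IsStoppingTimeIn ℱ T (fun ω => max (τ₂ ω) (τ₁ ω)) :=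
      ⟨DSopt.stMax hτ2 hτ1, fun ω => ⟨le_max_of_le_right (hicc1 ω).1,
        max_le (hicc2 ω).2 (hicc1 ω).2⟩⟩
    have hσmem : MemTS ℱ μ T τ₁ (fun ω => max (τ₂ ω) (τ₁ ω)) :=
      ⟨hσin, Filter.Eventually.of_forall fun ω => le_max_right _ _⟩
    have hmember := (hu₂ τ₁ hτ₁.1).2.1 _ ⟨_, hσmem, rfl⟩
    have hpsieq : ∀ᵐ ω ∂μ, ω ∈ A → ψ τ₁ (fun ω => max (τ₂ ω) (τ₁ ω)) ω = ψ τ₁ τ₂ ω := by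
      filter_upwards [hψ.2 τ₁ τ₁ (fun ω => max (τ₂ ω) (τ₁ ω)) τ₂ hτ₁.1 hτ₁.1 hσin hτ₂.1]
        with ω himp hA'
      exact himp rfl (max_eq_left hA')
    have heq := DSopt.condexp_eq_on hm1 hA1 (DSopt.psi_int hψ hZint hZ hτ₁.1 hσin) hτint hpsieq
    filter_upwards [hmember, heq] with ω e1 e2 hA'
    rw [← e2 hA']
    exact e1
  -- Claim (3), core
  have hC3le : ∀ τ, MemTS ℱ μ T τ₂ τ → ∀ᵐ ω ∂μ, ω ∈ Aᶜ →
      (μ[ψ τ τ₂|hτ2.measurableSpace]) ω ≤ (μ[ψ τ₁ τ₂|hτ2.measurableSpace]) ω := by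
    intro τ hτ
    have hα₁in : IsStoppingTimeIn ℱ T (fun ω => max (τ ω) (τ₂ ω)) :=
      ⟨DSopt.stMax hτ.1.1 hτ2, fun ω => ⟨le_max_of_le_right (hicc2 ω).1,
        max_le (hτ.1.2 ω).2 (hicc2 ω).2⟩⟩
    have hcore := DSopt.coreLe hψ hZint hZ hv hS hτ₁ hτ₂ hopt hτ2 hα₁in hτ₂.1
      (fun ω => le_max_right (τ ω) (τ₂ ω)) (fun ω => le_rfl)
      (by filter_upwards [hSτ2] with ω e; exact le_trans e (le_max_right _ _)) hSτ2
      hA2.compl (fun ω hω => show τ₂ ω ≤ τ₁ ω from le_of_not_ge hω)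
      (fun ω _ => show τ₂ ω ≤ τ₂ ω from le_rfl)
    have hcongr : μ[ψ (fun ω => max (τ ω) (τ₂ ω)) τ₂|hτ2.measurableSpace]
        =ᵐ[μ] μ[ψ τ τ₂|hτ2.measurableSpace] := by
      refine condExp_congr_ae ?_
      filter_upwards [hψ.2 (fun ω => max (τ ω) (τ₂ ω)) τ τ₂ τ₂ hα₁in hτ.1 hτ₂.1 hτ₂.1, hτ.2]
        with ω himp hle
      exact himp (max_eq_left hle) rfl
    filter_upwards [hcore, hcongr] with ω h1 h2 hA'
    rw [← h2]
    exact h1 hA'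
  have hC3 : ∀ᵐ ω ∂μ, ω ∈ Aᶜ → u₁ τ₂ ω ≤ (μ[ψ τ₁ τ₂|hτ2.measurableSpace]) ω := by
    refine DSopt.essSup_le_on (hu₁ τ₂ hτ₂.1).2 ?_
    rintro f ⟨τ, hτ, rfl⟩
    exact hC3le τ hτ
  have hC3ge : ∀ᵐ ω ∂μ, ω ∈ Aᶜ → (μ[ψ τ₁ τ₂|hτ2.measurableSpace]) ω ≤ u₁ τ₂ ω := by
    have hσin : IsStoppingTimeIn ℱ T (fun ω => max (τ₁ ω) (τ₂ ω)) :=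
      ⟨DSopt.stMax hτ1 hτ2, fun ω => ⟨le_max_of_le_right (hicc2 ω).1,
        max_le (hicc1 ω).2 (hicc2 ω).2⟩⟩
    have hσmem : MemTS ℱ μ T τ₂ (fun ω => max (τ₁ ω) (τ₂ ω)) :=
      ⟨hσin, Filter.Eventually.of_forall fun ω => le_max_right _ _⟩
    have hmember := (hu₁ τ₂ hτ₂.1).2.1 _ ⟨_, hσmem, rfl⟩
    have hpsieq : ∀ᵐ ω ∂μ, ω ∈ Aᶜ → ψ (fun ω => max (τ₁ ω) (τ₂ ω)) τ₂ ω = ψ τ₁ τ₂ ω := by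
      filter_upwards [hψ.2 (fun ω => max (τ₁ ω) (τ₂ ω)) τ₁ τ₂ τ₂ hσin hτ₁.1 hτ₂.1 hτ₂.1]
        with ω himp hA'
      exact himp (max_eq_left (le_of_not_ge hA')) rfl
    have heq := DSopt.condexp_eq_on hm2 hA2.compl
      (DSopt.psi_int hψ hZint hZ hσin hτ₂.1) hτint hpsieq
    filter_upwards [hmember, heq] with ω e1 e2 hA'
    rw [← e2 hA']
    exact e1
  -- Claim (4) and auxiliary facts at the minimum
  have hC4le : ∀ τ, MemTS ℱ μ T (τ₁ ⊓ τ₂) τ → ∀ᵐ ω ∂μ, ω ∈ A →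
      (μ[ψ τ (τ₁ ⊓ τ₂)|hθst.measurableSpace]) ω ≤ (μ[ψ τ₁ τ₂|hθst.measurableSpace]) ω := by
    intro τ hτ
    have hα₁in : IsStoppingTimeIn ℱ T (fun ω => max (τ ω) ((τ₁ ⊓ τ₂) ω)) :=
      ⟨DSopt.stMax hτ.1.1 hθst, fun ω => ⟨le_max_of_le_right (hθin.2 ω).1,
        max_le (hτ.1.2 ω).2 (hθin.2 ω).2⟩⟩
    have hcore := DSopt.coreLe hψ hZint hZ hv hS hτ₁ hτ₂ hopt hθst hα₁in hθin
      (fun ω => le_max_right (τ ω) ((τ₁ ⊓ τ₂) ω)) (fun ω => le_rfl)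
      (by filter_upwards [hθmem.2] with ω e; exact le_trans e (le_max_right _ _)) hθmem.2
      hAθ (fun ω _ => show (τ₁ ⊓ τ₂) ω ≤ τ₁ ω from inf_le_left)
      (fun ω _ => show (τ₁ ⊓ τ₂) ω ≤ τ₂ ω from inf_le_right)
    have hcongr : μ[ψ (fun ω => max (τ ω) ((τ₁ ⊓ τ₂) ω)) (τ₁ ⊓ τ₂)|hθst.measurableSpace]
        =ᵐ[μ] μ[ψ τ (τ₁ ⊓ τ₂)|hθst.measurableSpace] := by
      refine condExp_congr_ae ?_
      filter_upwards [hψ.2 (fun ω => max (τ ω) ((τ₁ ⊓ τ₂) ω)) τ (τ₁ ⊓ τ₂) (τ₁ ⊓ τ₂)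
        hα₁in hτ.1 hθin hθin, hτ.2] with ω himp hle
      exact himp (max_eq_left hle) rfl
    filter_upwards [hcore, hcongr] with ω h1 h2 hA'
    rw [← h2]
    exact h1 hA'
  have hu1A : ∀ᵐ ω ∂μ, ω ∈ A → u₁ (τ₁ ⊓ τ₂) ω ≤ (μ[ψ τ₁ τ₂|hθst.measurableSpace]) ω := by
    refine DSopt.essSup_le_on (hu₁ (τ₁ ⊓ τ₂) hθin).2 ?_
    rintro f ⟨τ, hτ, rfl⟩
    exact hC4le τ hτ
  have hu2A : ∀ᵐ ω ∂μ, ω ∈ A → (μ[ψ τ₁ τ₂|hθst.measurableSpace]) ω ≤ u₂ (τ₁ ⊓ τ₂) ω := by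
    have hσin : IsStoppingTimeIn ℱ T (fun ω => max (τ₂ ω) ((τ₁ ⊓ τ₂) ω)) :=
      ⟨DSopt.stMax hτ2 hθst, fun ω => ⟨le_max_of_le_right (hθin.2 ω).1,
        max_le (hicc2 ω).2 (hθin.2 ω).2⟩⟩
    have hσmem : MemTS ℱ μ T (τ₁ ⊓ τ₂) (fun ω => max (τ₂ ω) ((τ₁ ⊓ τ₂) ω)) :=
      ⟨hσin, Filter.Eventually.of_forall fun ω => le_max_right _ _⟩
    have hmember := (hu₂ (τ₁ ⊓ τ₂) hθin).2.1 _ ⟨_, hσmem, rfl⟩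
    have hpsieq : ∀ᵐ ω ∂μ, ω ∈ A →
        ψ (τ₁ ⊓ τ₂) (fun ω => max (τ₂ ω) ((τ₁ ⊓ τ₂) ω)) ω = ψ τ₁ τ₂ ω := by
      filter_upwards [hψ.2 (τ₁ ⊓ τ₂) τ₁ (fun ω => max (τ₂ ω) ((τ₁ ⊓ τ₂) ω)) τ₂
        hθin hτ₁.1 hσin hτ₂.1] with ω himp hA'
      exact himp (inf_eq_left.2 hA') (max_eq_left inf_le_right)
    have heq := DSopt.condexp_eq_on hmθ hAθ
      (DSopt.psi_int hψ hZint hZ hθin hσin) hτint hpsieq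
    filter_upwards [hmember, heq] with ω e1 e2 hA'
    rw [← e2 hA']
    exact e1
  have hu1Ac : ∀ᵐ ω ∂μ, ω ∈ Aᶜ → (μ[ψ τ₁ τ₂|hθst.measurableSpace]) ω ≤ u₁ (τ₁ ⊓ τ₂) ω := by
    have hσin : IsStoppingTimeIn ℱ T (fun ω => max (τ₁ ω) ((τ₁ ⊓ τ₂) ω)) :=
      ⟨DSopt.stMax hτ1 hθst, fun ω => ⟨le_max_of_le_right (hθin.2 ω).1,
        max_le (hicc1 ω).2 (hθin.2 ω).2⟩⟩
    have hσmem : MemTS ℱ μ T (τ₁ ⊓ τ₂) (fun ω => max (τ₁ ω) ((τ₁ ⊓ τ₂) ω)) :=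
      ⟨hσin, Filter.Eventually.of_forall fun ω => le_max_right _ _⟩
    have hmember := (hu₁ (τ₁ ⊓ τ₂) hθin).2.1 _ ⟨_, hσmem, rfl⟩
    have hpsieq : ∀ᵐ ω ∂μ, ω ∈ Aᶜ →
        ψ (fun ω => max (τ₁ ω) ((τ₁ ⊓ τ₂) ω)) (τ₁ ⊓ τ₂) ω = ψ τ₁ τ₂ ω := by
      filter_upwards [hψ.2 (fun ω => max (τ₁ ω) ((τ₁ ⊓ τ₂) ω)) τ₁ (τ₁ ⊓ τ₂) τ₂
        hσin hτ₁.1 hθin hτ₂.1] with ω himp hA'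
      exact himp (max_eq_left inf_le_left) (inf_eq_right.2 (le_of_not_ge hA'))
    have heq := DSopt.condexp_eq_on hmθ hAθ.compl
      (DSopt.psi_int hψ hZint hZ hσin hθin) hτint hpsieq
    filter_upwards [hmember, heq] with ω e1 e2 hA'
    rw [← e2 hA']
    exact e1
  have hphi : μ[ψ τ₁ τ₂|hθst.measurableSpace] ≤ᵐ[μ] u₁ (τ₁ ⊓ τ₂) ⊔ u₂ (τ₁ ⊓ τ₂) := by
    filter_upwards [hu2A, hu1Ac] with ω e1 e2
    by_cases hω : ω ∈ A
    · exact le_trans (e1 hω) (le_max_right _ _)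
    · exact le_trans (e2 hω) (le_max_left _ _)
  refine ⟨?_, ?_, ?_, ?_⟩
  · -- Claim (1)
    have hufacts : ∀ (θ : Ω → ℝ) (hθ : IsStoppingTimeIn ℱ T θ),
        (Integrable (u₁ θ) μ ∧ 0 ≤ᵐ[μ] u₁ θ ∧ u₁ θ ≤ᵐ[μ] μ[Z|hθ.1.measurableSpace]) ∧
        (Integrable (u₂ θ) μ ∧ 0 ≤ᵐ[μ] u₂ θ ∧ u₂ θ ≤ᵐ[μ] μ[Z|hθ.1.measurableSpace]) := by
      intro θ hθ
      have hrefl : MemTS ℱ μ T θ θ := ⟨hθ, Filter.Eventually.of_forall fun _ => le_rfl⟩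
      have h1bd : u₁ θ ≤ᵐ[μ] μ[Z|hθ.1.measurableSpace] :=
        (hu₁ θ hθ).2.2 _ fun f hf => (DSopt.u1Set_props hψ hZint hZ hθ f hf).2.1
      have h2bd : u₂ θ ≤ᵐ[μ] μ[Z|hθ.1.measurableSpace] :=
        (hu₂ θ hθ).2.2 _ fun f hf => (DSopt.u2Set_props hψ hZint hZ hθ f hf).2.1
      have h1nn : 0 ≤ᵐ[μ] u₁ θ := by
        have hmem := (hu₁ θ hθ).2.1 _ ⟨θ, hrefl, rfl⟩
        have hnn := (DSopt.u1Set_props hψ hZint hZ hθ _ ⟨θ, hrefl, rfl⟩).2.2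
        filter_upwards [hmem, hnn] with ω e1 e2 using le_trans e2 e1
      have h2nn : 0 ≤ᵐ[μ] u₂ θ := by
        have hmem := (hu₂ θ hθ).2.1 _ ⟨θ, hrefl, rfl⟩
        have hnn := (DSopt.u2Set_props hψ hZint hZ hθ _ ⟨θ, hrefl, rfl⟩).2.2
        filter_upwards [hmem, hnn] with ω e1 e2 using le_trans e2 e1
      have h1int : Integrable (u₁ θ) μ := by
        refine Integrable.mono'
          ((integrable_condExp : Integrable (μ[Z|hθ.1.measurableSpace]) μ).abs)
          (((hu₁ θ hθ).1.mono hθ.1.measurableSpace_le le_rfl).aestronglyMeasurable) ?_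
        filter_upwards [h1bd, h1nn] with ω e1 e2
        rw [Real.norm_eq_abs, abs_of_nonneg e2]
        exact le_trans e1 (le_abs_self _)
      have h2int : Integrable (u₂ θ) μ := by
        refine Integrable.mono'
          ((integrable_condExp : Integrable (μ[Z|hθ.1.measurableSpace]) μ).abs)
          (((hu₂ θ hθ).1.mono hθ.1.measurableSpace_le le_rfl).aestronglyMeasurable) ?_
        filter_upwards [h2bd, h2nn] with ω e1 e2
        rw [Real.norm_eq_abs, abs_of_nonneg e2]
        exact le_trans e1 (le_abs_self _)
      exact ⟨⟨h1int, h1nn, h1bd⟩, h2int, h2nn, h2bd⟩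
    have hφint : Integrable (u₁ (τ₁ ⊓ τ₂) ⊔ u₂ (τ₁ ⊓ τ₂)) μ :=
      ((hufacts _ hθin).1.1).sup ((hufacts _ hθin).2.1)
    have hkey2 : ∀ C, MeasurableSet[hS.1.measurableSpace] C →
        ∫ ω in C, ψ τ₁ τ₂ ω ∂μ ≤ ∫ ω in C, (u₁ (τ₁ ⊓ τ₂) ⊔ u₂ (τ₁ ⊓ τ₂)) ω ∂μ := by
      intro C hC
      set Dst := {ω | S ω ≤ (τ₁ ⊓ τ₂) ω} with hDst
      have hCD : MeasurableSet[hθst.measurableSpace] (C ∩ Dst) := DSopt.interMem hS.1 hθst hC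
      have hnull : (C ∩ Dst : Set Ω) =ᵐ[μ] C := by
        refine Filter.eventuallyEq_set.2 ?_
        filter_upwards [hθmem.2] with ω hω
        exact ⟨fun h => h.1, fun h => ⟨h, hω⟩⟩
      calc ∫ ω in C, ψ τ₁ τ₂ ω ∂μ = ∫ ω in C ∩ Dst, ψ τ₁ τ₂ ω ∂μ :=
            (setIntegral_congr_set hnull).symm
        _ = ∫ ω in C ∩ Dst, (μ[ψ τ₁ τ₂|hθst.measurableSpace]) ω ∂μ :=
            (setIntegral_condExp hmθ hτint hCD).symm
        _ ≤ ∫ ω in C ∩ Dst, (u₁ (τ₁ ⊓ τ₂) ⊔ u₂ (τ₁ ⊓ τ₂)) ω ∂μ :=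
            setIntegral_mono_ae integrable_condExp.integrableOn hφint.integrableOn hphi
        _ = ∫ ω in C, (u₁ (τ₁ ⊓ τ₂) ⊔ u₂ (τ₁ ⊓ τ₂)) ω ∂μ := setIntegral_congr_set hnull
    have hseq1 : ∀ (θ : Ω → ℝ) (hθ : IsStoppingTimeIn ℱ T θ),
        ∃ F : ℕ → Ω → ℝ, (∀ n, F n ∈ u1Set ℱ μ T ψ θ hθ.1) ∧
          (∀ᵐ ω ∂μ, (Monotone fun n => F n ω) ∧
            Tendsto (fun n => F n ω) atTop (nhds (u₁ θ ω))) := by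
      intro θ hθ
      exact DSopt.essSup_attained (hu₁ θ hθ).2
        ⟨_, ⟨θ, ⟨hθ, Filter.Eventually.of_forall fun _ => le_rfl⟩, rfl⟩⟩
        (fun f hf => (DSopt.u1Set_props hψ hZint hZ hθ f hf).1) integrable_condExp
        (fun f hf => (DSopt.u1Set_props hψ hZint hZ hθ f hf).2.1)
        (DSopt.u1Set_directed hψ hZint hZ hθ)
    have hseq2 : ∀ (θ : Ω → ℝ) (hθ : IsStoppingTimeIn ℱ T θ),
        ∃ F : ℕ → Ω → ℝ, (∀ n, F n ∈ u2Set ℱ μ T ψ θ hθ.1) ∧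
          (∀ᵐ ω ∂μ, (Monotone fun n => F n ω) ∧
            Tendsto (fun n => F n ω) atTop (nhds (u₂ θ ω))) := by
      intro θ hθ
      exact DSopt.essSup_attained (hu₂ θ hθ).2
        ⟨_, ⟨θ, ⟨hθ, Filter.Eventually.of_forall fun _ => le_rfl⟩, rfl⟩⟩
        (fun f hf => (DSopt.u2Set_props hψ hZint hZ hθ f hf).1) integrable_condExp
        (fun f hf => (DSopt.u2Set_props hψ hZint hZ hθ f hf).2.1)
        (DSopt.u2Set_directed hψ hZint hZ hθ)
    have hkey : ∀ (θ : Ω → ℝ), MemTS ℱ μ T S θ → ∀ C : Set Ω,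
        MeasurableSet[hS.1.measurableSpace] C →
        ∫ ω in C, (u₁ θ ⊔ u₂ θ) ω ∂μ ≤ ∫ ω in C, ψ τ₁ τ₂ ω ∂μ := by
      rintro θ ⟨hθ, hSθ⟩ C hC
      have hmθ' : hθ.1.measurableSpace ≤ m := hθ.1.measurableSpace_le
      have hφθint : Integrable (u₁ θ ⊔ u₂ θ) μ :=
        ((hufacts θ hθ).1.1).sup ((hufacts θ hθ).2.1)
      set D := {ω | S ω ≤ θ ω} with hDdef
      have hCD : MeasurableSet[hθ.1.measurableSpace] (C ∩ D) := DSopt.interMem hS.1 hθ.1 hC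
      have hCDm : MeasurableSet (C ∩ D) := hmθ' _ hCD
      set E := {ω | u₂ θ ω ≤ u₁ θ ω} with hEdef
      have hE : MeasurableSet[hθ.1.measurableSpace] E :=
        measurableSet_le (hu₂ θ hθ).1 (hu₁ θ hθ).1
      set G₁ := (C ∩ D) ∩ E with hG₁def
      set G₂ := (C ∩ D) ∩ Eᶜ with hG₂def
      have hG₁ : MeasurableSet[hθ.1.measurableSpace] G₁ := hCD.inter hE
      have hG₂ : MeasurableSet[hθ.1.measurableSpace] G₂ := hCD.inter hE.compl
      have hG₁m : MeasurableSet G₁ := hmθ' _ hG₁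
      have hG₂m : MeasurableSet G₂ := hmθ' _ hG₂
      have hdisj : Disjoint G₁ G₂ := by
        refine Set.disjoint_left.2 ?_
        rintro ω ⟨-, hE1⟩ ⟨-, hE2⟩
        exact hE2 hE1
      have hU : G₁ ∪ G₂ = (C ∩ D) := by
        rw [hG₁def, hG₂def, ← Set.inter_union_distrib_left, Set.union_compl_self,
          Set.inter_univ]
      obtain ⟨F₁, hF₁mem, hF₁lim⟩ := hseq1 θ hθ
      obtain ⟨F₂, hF₂mem, hF₂lim⟩ := hseq2 θ hθ
      choose τs hτs hF₁eq using hF₁mem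
      choose σs hσs hF₂eq using hF₂mem
      set τb₁ := fun ω => max (τ₁ ω) (S ω) with hτb₁def
      set τb₂ := fun ω => max (τ₂ ω) (S ω) with hτb₂def
      have hτb₁st : IsStoppingTime ℱ (fun ω => (τb₁ ω : WithTop ℝ)) :=
        DSopt.stMax hτ1 hS.1
      have hτb₂st : IsStoppingTime ℱ (fun ω => (τb₂ ω : WithTop ℝ)) :=
        DSopt.stMax hτ2 hS.1
      have hτb₁in : IsStoppingTimeIn ℱ T τb₁ :=
        ⟨hτb₁st, fun ω => ⟨le_max_of_le_left (hicc1 ω).1, max_le (hicc1 ω).2 (hS.2 ω).2⟩⟩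
      have hτb₂in : IsStoppingTimeIn ℱ T τb₂ :=
        ⟨hτb₂st, fun ω => ⟨le_max_of_le_left (hicc2 ω).1, max_le (hicc2 ω).2 (hS.2 ω).2⟩⟩
      have hτb₁ae : ∀ᵐ ω ∂μ, τb₁ ω = τ₁ ω := by
        filter_upwards [hSτ1] with ω e
        rw [hτb₁def]
        exact max_eq_left e
      have hτb₂ae : ∀ᵐ ω ∂μ, τb₂ ω = τ₂ ω := by
        filter_upwards [hSτ2] with ω e
        rw [hτb₂def]
        exact max_eq_left e
      have hkeyn : ∀ n : ℕ,
          (∫ ω in G₁, F₁ n ω ∂μ) + ∫ ω in G₂, F₂ n ω ∂μ ≤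
            ∫ ω in C ∩ D, ψ τ₁ τ₂ ω ∂μ := by
        intro n
        set α₁ := fun ω => max (τs n ω) (θ ω) with hα₁def
        set α₂ := fun ω => max (σs n ω) (θ ω) with hα₂def
        have hα₁in : IsStoppingTimeIn ℱ T α₁ := ⟨DSopt.stMax (hτs n).1.1 hθ.1, fun ω =>
          ⟨le_max_of_le_right (hθ.2 ω).1, max_le ((hτs n).1.2 ω).2 (hθ.2 ω).2⟩⟩
        have hα₂in : IsStoppingTimeIn ℱ T α₂ := ⟨DSopt.stMax (hσs n).1.1 hθ.1, fun ω =>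
          ⟨le_max_of_le_right (hθ.2 ω).1, max_le ((hσs n).1.2 ω).2 (hθ.2 ω).2⟩⟩
        set ρ₁ := G₁.piecewise α₁ (G₂.piecewise θ τb₁) with hρ₁def
        set ρ₂ := G₁.piecewise θ (G₂.piecewise α₂ τb₂) with hρ₂def
        have hρ₁st : IsStoppingTime ℱ (fun ω => (ρ₁ ω : WithTop ℝ)) :=
          DSopt.paste3ST hS.1 hθ.1 hα₁in.1 hθ.1 hτb₁st hC hG₁ hG₂ hU
            (fun ω => le_max_right _ _) (fun ω => le_rfl) (fun ω => le_max_right _ _)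
        have hρ₂st : IsStoppingTime ℱ (fun ω => (ρ₂ ω : WithTop ℝ)) :=
          DSopt.paste3ST hS.1 hθ.1 hθ.1 hα₂in.1 hτb₂st hC hG₁ hG₂ hU
            (fun ω => le_rfl) (fun ω => le_max_right _ _) (fun ω => le_max_right _ _)
        have hρ₁in : IsStoppingTimeIn ℱ T ρ₁ := by
          refine ⟨hρ₁st, fun ω => ?_⟩
          by_cases h1 : ω ∈ G₁
          · rw [hρ₁def, Set.piecewise_eq_of_mem _ _ _ h1]; exact hα₁in.2 ω
          · rw [hρ₁def, Set.piecewise_eq_of_notMem _ _ _ h1]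
            by_cases h2 : ω ∈ G₂
            · rw [Set.piecewise_eq_of_mem _ _ _ h2]; exact hθ.2 ω
            · rw [Set.piecewise_eq_of_notMem _ _ _ h2]; exact hτb₁in.2 ω
        have hρ₂in : IsStoppingTimeIn ℱ T ρ₂ := by
          refine ⟨hρ₂st, fun ω => ?_⟩
          by_cases h1 : ω ∈ G₁
          · rw [hρ₂def, Set.piecewise_eq_of_mem _ _ _ h1]; exact hθ.2 ω
          · rw [hρ₂def, Set.piecewise_eq_of_notMem _ _ _ h1]
            by_cases h2 : ω ∈ G₂
            · rw [Set.piecewise_eq_of_mem _ _ _ h2]; exact hα₂in.2 ω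
            · rw [Set.piecewise_eq_of_notMem _ _ _ h2]; exact hτb₂in.2 ω
        have hρ₁mem : MemTS ℱ μ T S ρ₁ := by
          refine ⟨hρ₁in, ?_⟩
          filter_upwards [hSθ] with ω e1
          by_cases h1 : ω ∈ G₁
          · rw [hρ₁def, Set.piecewise_eq_of_mem _ _ _ h1]
            exact le_trans e1 (le_max_right _ _)
          · rw [hρ₁def, Set.piecewise_eq_of_notMem _ _ _ h1]
            by_cases h2 : ω ∈ G₂
            · rw [Set.piecewise_eq_of_mem _ _ _ h2]; exact e1
            · rw [Set.piecewise_eq_of_notMem _ _ _ h2]; exact le_max_right _ _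
        have hρ₂mem : MemTS ℱ μ T S ρ₂ := by
          refine ⟨hρ₂in, ?_⟩
          filter_upwards [hSθ] with ω e1
          by_cases h1 : ω ∈ G₁
          · rw [hρ₂def, Set.piecewise_eq_of_mem _ _ _ h1]; exact e1
          · rw [hρ₂def, Set.piecewise_eq_of_notMem _ _ _ h1]
            by_cases h2 : ω ∈ G₂
            · rw [Set.piecewise_eq_of_mem _ _ _ h2]
              exact le_trans e1 (le_max_right _ _)
            · rw [Set.piecewise_eq_of_notMem _ _ _ h2]; exact le_max_right _ _
        have hρint : Integrable (ψ ρ₁ ρ₂) μ := DSopt.psi_int hψ hZint hZ hρ₁in hρ₂in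
        have hOILn : ∫ ω, ψ ρ₁ ρ₂ ω ∂μ ≤ ∫ ω, ψ τ₁ τ₂ ω ∂μ := by
          have hvS := (hv S hS).1 _ ⟨ρ₁, ρ₂, hρ₁mem, hρ₂mem, rfl⟩
          calc ∫ ω, ψ ρ₁ ρ₂ ω ∂μ = ∫ ω, (μ[ψ ρ₁ ρ₂|hS.1.measurableSpace]) ω ∂μ :=
                (integral_condExp hmS).symm
            _ ≤ ∫ ω, (μ[ψ τ₁ τ₂|hS.1.measurableSpace]) ω ∂μ :=
                integral_mono_ae integrable_condExp integrable_condExp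
                  (by filter_upwards [hvS, hopt] with ω e1 e2; exact e1.trans e2.le)
            _ = ∫ ω, ψ τ₁ τ₂ ω ∂μ := integral_condExp hmS
        have honG₁ : ∀ᵐ ω ∂μ, ω ∈ G₁ → ψ ρ₁ ρ₂ ω = ψ (τs n) θ ω := by
          filter_upwards [hψ.2 ρ₁ (τs n) ρ₂ θ hρ₁in (hτs n).1 hρ₂in hθ, (hτs n).2]
            with ω himp hle hω
          refine himp ?_ ?_
          · rw [hρ₁def, Set.piecewise_eq_of_mem _ _ _ hω, hα₁def]
            exact max_eq_left hle
          · rw [hρ₂def, Set.piecewise_eq_of_mem _ _ _ hω]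
        have honG₂ : ∀ᵐ ω ∂μ, ω ∈ G₂ → ψ ρ₁ ρ₂ ω = ψ θ (σs n) ω := by
          filter_upwards [hψ.2 ρ₁ θ ρ₂ (σs n) hρ₁in hθ hρ₂in (hσs n).1, (hσs n).2]
            with ω himp hle hω
          have hω1 : ω ∉ G₁ := fun h => (Set.disjoint_left.1 hdisj h) hω
          refine himp ?_ ?_
          · rw [hρ₁def, Set.piecewise_eq_of_notMem _ _ _ hω1,
              Set.piecewise_eq_of_mem _ _ _ hω]
          · rw [hρ₂def, Set.piecewise_eq_of_notMem _ _ _ hω1,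
              Set.piecewise_eq_of_mem _ _ _ hω, hα₂def]
            exact max_eq_left hle
        have hoff : ∀ᵐ ω ∂μ, ω ∈ (C ∩ D)ᶜ → ψ ρ₁ ρ₂ ω = ψ τ₁ τ₂ ω := by
          filter_upwards [hψ.2 ρ₁ τ₁ ρ₂ τ₂ hρ₁in hτ₁.1 hρ₂in hτ₂.1, hτb₁ae, hτb₂ae]
            with ω himp e1 e2 hω
          have hω1 : ω ∉ G₁ := fun h => hω (hU ▸ Set.mem_union_left G₂ h)
          have hω2 : ω ∉ G₂ := fun h => hω (hU ▸ Set.mem_union_right G₁ h)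
          refine himp ?_ ?_
          · rw [hρ₁def, Set.piecewise_eq_of_notMem _ _ _ hω1,
              Set.piecewise_eq_of_notMem _ _ _ hω2]
            exact e1
          · rw [hρ₂def, Set.piecewise_eq_of_notMem _ _ _ hω1,
              Set.piecewise_eq_of_notMem _ _ _ hω2]
            exact e2
        have hsplit : ∫ ω, ψ ρ₁ ρ₂ ω ∂μ =
            ((∫ ω in G₁, ψ (τs n) θ ω ∂μ) + ∫ ω in G₂, ψ θ (σs n) ω ∂μ) +
              ∫ ω in (C ∩ D)ᶜ, ψ τ₁ τ₂ ω ∂μ := by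
          rw [← integral_add_compl hCDm hρint]
          congr 1
          · rw [← hU, setIntegral_union hdisj hG₂m hρint.integrableOn hρint.integrableOn]
            congr 1
            · exact setIntegral_congr_ae hG₁m honG₁
            · exact setIntegral_congr_ae hG₂m honG₂
          · exact setIntegral_congr_ae hCDm.compl hoff
        have hsplit2 : ∫ ω, ψ τ₁ τ₂ ω ∂μ =
            (∫ ω in C ∩ D, ψ τ₁ τ₂ ω ∂μ) + ∫ ω in (C ∩ D)ᶜ, ψ τ₁ τ₂ ω ∂μ :=
          (integral_add_compl hCDm hτint).symm
        have hG₁int : ∫ ω in G₁, ψ (τs n) θ ω ∂μ = ∫ ω in G₁, F₁ n ω ∂μ := by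
          rw [hF₁eq n]
          exact (setIntegral_condExp hmθ' (DSopt.psi_int hψ hZint hZ (hτs n).1 hθ) hG₁).symm
        have hG₂int : ∫ ω in G₂, ψ θ (σs n) ω ∂μ = ∫ ω in G₂, F₂ n ω ∂μ := by
          rw [hF₂eq n]
          exact (setIntegral_condExp hmθ' (DSopt.psi_int hψ hZint hZ hθ (hσs n).1) hG₂).symm
        rw [← hG₁int, ← hG₂int]
        have hcomb := hOILn
        rw [hsplit, hsplit2] at hcomb
        linarith
      have hζabs : Integrable (fun ω => |(μ[Z|hθ.1.measurableSpace]) ω|) μ :=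
        (integrable_condExp : Integrable (μ[Z|hθ.1.measurableSpace]) μ).abs
      have hbound1 : ∀ n, ∀ᵐ ω ∂μ.restrict G₁,
          ‖F₁ n ω‖ ≤ |(μ[Z|hθ.1.measurableSpace]) ω| := by
        intro n
        refine ae_restrict_of_ae ?_
        filter_upwards [(DSopt.u1Set_props hψ hZint hZ hθ _ ⟨τs n, hτs n, hF₁eq n⟩).2.1,
          (DSopt.u1Set_props hψ hZint hZ hθ _ ⟨τs n, hτs n, hF₁eq n⟩).2.2] with ω e1 e2
        rw [Real.norm_eq_abs, abs_of_nonneg e2]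
        exact le_trans e1 (le_abs_self _)
      have hbound2 : ∀ n, ∀ᵐ ω ∂μ.restrict G₂,
          ‖F₂ n ω‖ ≤ |(μ[Z|hθ.1.measurableSpace]) ω| := by
        intro n
        refine ae_restrict_of_ae ?_
        filter_upwards [(DSopt.u2Set_props hψ hZint hZ hθ _ ⟨σs n, hσs n, hF₂eq n⟩).2.1,
          (DSopt.u2Set_props hψ hZint hZ hθ _ ⟨σs n, hσs n, hF₂eq n⟩).2.2] with ω e1 e2
        rw [Real.norm_eq_abs, abs_of_nonneg e2]
        exact le_trans e1 (le_abs_self _)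
      have hmeas1 : ∀ n, AEStronglyMeasurable (F₁ n) (μ.restrict G₁) := fun n =>
        ((DSopt.u1Set_props hψ hZint hZ hθ _
          ⟨τs n, hτs n, hF₁eq n⟩).1).aestronglyMeasurable.restrict
      have hmeas2 : ∀ n, AEStronglyMeasurable (F₂ n) (μ.restrict G₂) := fun n =>
        ((DSopt.u2Set_props hψ hZint hZ hθ _
          ⟨σs n, hσs n, hF₂eq n⟩).1).aestronglyMeasurable.restrict
      have hlim1 : Tendsto (fun n => ∫ ω in G₁, F₁ n ω ∂μ) atTop
          (nhds (∫ ω in G₁, u₁ θ ω ∂μ)) := by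
        refine tendsto_integral_of_dominated_convergence _ hmeas1 hζabs.restrict hbound1 ?_
        refine ae_restrict_of_ae ?_
        filter_upwards [hF₁lim] with ω hω using hω.2
      have hlim2 : Tendsto (fun n => ∫ ω in G₂, F₂ n ω ∂μ) atTop
          (nhds (∫ ω in G₂, u₂ θ ω ∂μ)) := by
        refine tendsto_integral_of_dominated_convergence _ hmeas2 hζabs.restrict hbound2 ?_
        refine ae_restrict_of_ae ?_
        filter_upwards [hF₂lim] with ω hω using hω.2
      have hlimle : (∫ ω in G₁, u₁ θ ω ∂μ) + ∫ ω in G₂, u₂ θ ω ∂μ ≤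
          ∫ ω in C ∩ D, ψ τ₁ τ₂ ω ∂μ :=
        le_of_tendsto (hlim1.add hlim2) (Filter.Eventually.of_forall hkeyn)
      have hnullC : (C ∩ D : Set Ω) =ᵐ[μ] C := by
        refine Filter.eventuallyEq_set.2 ?_
        filter_upwards [hSθ] with ω hω
        exact ⟨fun h => h.1, fun h => ⟨h, hω⟩⟩
      have hsplitφ : ∫ ω in C, (u₁ θ ⊔ u₂ θ) ω ∂μ =
          (∫ ω in G₁, u₁ θ ω ∂μ) + ∫ ω in G₂, u₂ θ ω ∂μ := by
        rw [← setIntegral_congr_set hnullC, ← hU,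
          setIntegral_union hdisj hG₂m hφθint.integrableOn hφθint.integrableOn]
        congr 1
        · refine setIntegral_congr_fun hG₁m fun ω hω => ?_
          simp only [Pi.sup_apply]
          exact sup_eq_left.2 hω.2
        · refine setIntegral_congr_fun hG₂m fun ω hω => ?_
          simp only [Pi.sup_apply]
          exact sup_eq_right.2 (le_of_not_ge hω.2)
      calc ∫ ω in C, (u₁ θ ⊔ u₂ θ) ω ∂μ
          = (∫ ω in G₁, u₁ θ ω ∂μ) + ∫ ω in G₂, u₂ θ ω ∂μ := hsplitφ
        _ ≤ ∫ ω in C ∩ D, ψ τ₁ τ₂ ω ∂μ := hlimle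
        _ = ∫ ω in C, ψ τ₁ τ₂ ω ∂μ := setIntegral_congr_set hnullC
    have hfinal : ∀ f ∈ valueSet ℱ μ T (fun θ => u₁ θ ⊔ u₂ θ) S hS.1,
        f ≤ᵐ[μ] μ[u₁ (τ₁ ⊓ τ₂) ⊔ u₂ (τ₁ ⊓ τ₂)|hS.1.measurableSpace] := by
      rintro f ⟨θ, hθm, rfl⟩
      refine DSopt.condexp_le_condexp_of_setIntegral_le hmS
        (((hufacts θ hθm.1).1.1).sup ((hufacts θ hθm.1).2.1)) hφint ?_
      intro C hC
      exact le_trans (hkey θ hθm C hC) (hkey2 C hC)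
    have hle := (hu S hS).2 _ hfinal
    have hge := (hu S hS).1 _ ⟨τ₁ ⊓ τ₂, hθmem, rfl⟩
    filter_upwards [hle, hge] with ω e1 e2
    exact le_antisymm e1 e2
  · filter_upwards [hC2, hC2ge] with ω e1 e2 hle
    exact le_antisymm (e1 hle) (e2 hle)
  · filter_upwards [hC3, hC3ge] with ω e1 e2 hle
    exact le_antisymm (e1 hle) (e2 hle)
  · filter_upwards [hu1A, hu2A] with ω e1 e2 hle
    exact le_trans (e1 hle) (e2 hle)
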